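/- For all natural numbers h ≤ k: if A is an operator form of L0 with lev(A) = h and the two-formula sequent B, C' has a cut-free derivation in M^Ω_k (where C is a formula of L0), then the sequent (¬A)(B), A'(C') also has a cut-free derivation in M^Ω_k. -/

import Mathlib

namespace OneVarMu

/-- Operator forms of the language `L_Ω` (one fixed variable `X`, written `var`).
`nut` is the auxiliary fixed-point connective `ν̃`; `L0` operator forms are the
`nut`-free ones. -/
inductive Form : Type
  | atom  : ℕ → Form          -- p_i
  | natom : ℕ → Form          -- p̄_i
  | var   : Form              -- X
  | and   : Form → Form → Form
  | or    : Form → Form → Form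
  | box   : Form → Form
  | dia   : Form → Form
  | mu    : Form → Form       -- μX.A
  | nu    : Form → Form       -- νX.A
  | nut   : Form → Form       -- ν̃X.A
  deriving DecidableEq

namespace Form

/-- Negation `¬A` (on `ν̃` we extend the `L0` definition as for `ν`). -/
def compl : Form → Form
  | atom i  => natom i
  | natom i => atom i
  | var     => var
  | and A B => or (compl A) (compl B)
  | or A B  => and (compl A) (compl B)
  | box A   => dia (compl A)
  | dia A   => box (compl A)
  | mu A    => nu (compl A)
  | nu A    => mu (compl A)
  | nut A   => mu (compl A)

/-- `subst A B` is `A(B)`: substitute `B` for every free occurrence of `X` in `A`. -/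
def subst : Form → Form → Form
  | atom i, _  => atom i
  | natom i, _ => natom i
  | var, B     => B
  | and A1 A2, B => and (subst A1 B) (subst A2 B)
  | or A1 A2, B  => or (subst A1 B) (subst A2 B)
  | box A, B   => box (subst A B)
  | dia A, B   => dia (subst A B)
  | mu A, _    => mu A
  | nu A, _    => nu A
  | nut A, _   => nut A

/-- The level of an operator form: maximal nesting of fixed-point operators. -/
def lev : Form → ℕ
  | atom _  => 0
  | natom _ => 0
  | var     => 0
  | and A B => max (lev A) (lev B)
  | or A B  => max (lev A) (lev B)
  | box A   => lev A
  | dia A   => lev A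
  | mu A    => lev A + 1
  | nu A    => lev A + 1
  | nut A   => lev A + 1

/-- `A'`: replace every occurrence of `νX` by `ν̃X`. -/
def prime : Form → Form
  | atom i  => atom i
  | natom i => natom i
  | var     => var
  | and A B => and (prime A) (prime B)
  | or A B  => or (prime A) (prime B)
  | box A   => box (prime A)
  | dia A   => dia (prime A)
  | mu A    => mu (prime A)
  | nu A    => nut (prime A)
  | nut A   => nut (prime A)

/-- `A` is an operator form of `L0`, i.e. contains no `ν̃`. -/
def IsL0 : Form → Prop
  | and A B => IsL0 A ∧ IsL0 B
  | or A B  => IsL0 A ∧ IsL0 B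
  | box A   => IsL0 A
  | dia A   => IsL0 A
  | mu A    => IsL0 A
  | nu A    => IsL0 A
  | nut _   => False
  | _       => True

/-- `A` has no free occurrence of the variable `X`, i.e. `A` is a formula. -/
def ClosedF : Form → Prop
  | var     => False
  | and A B => ClosedF A ∧ ClosedF B
  | or A B  => ClosedF A ∧ ClosedF B
  | box A   => ClosedF A
  | dia A   => ClosedF A
  | _       => True

/-- `⊤ := p ∨ p̄` for a fixed atomic proposition. -/
def top : Form := or (atom 0) (natom 0)

/-- Finite iterations `A^i(⊤)`. -/
def iter (A : Form) : ℕ → Form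
  | 0     => top
  | n + 1 => subst A (iter A n)

/-- `OccursIn A B`: the operator form `A` occurs (as a subterm) in `B`. -/
def OccursIn (A : Form) : Form → Prop
  | atom i  => A = atom i
  | natom i => A = natom i
  | var     => A = var
  | and C D => A = and C D ∨ OccursIn A C ∨ OccursIn A D
  | or C D  => A = or C D ∨ OccursIn A C ∨ OccursIn A D
  | box C   => A = box C ∨ OccursIn A C
  | dia C   => A = dia C ∨ OccursIn A C
  | mu C    => A = mu C ∨ OccursIn A C
  | nu C    => A = nu C ∨ OccursIn A C
  | nut C   => A = nut C ∨ OccursIn A C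

/-- `replace t r A`: simultaneously replace every occurrence of `t` in `A` by `r`. -/
def replace (t r : Form) : Form → Form
  | and A B => if and A B = t then r else and (replace t r A) (replace t r B)
  | or A B  => if or A B = t then r else or (replace t r A) (replace t r B)
  | box A   => if box A = t then r else box (replace t r A)
  | dia A   => if dia A = t then r else dia (replace t r A)
  | mu A    => if mu A = t then r else mu (replace t r A)
  | nu A    => if nu A = t then r else nu (replace t r A)
  | nut A   => if nut A = t then r else nut (replace t r A)
  | A       => if A = t then r else A

end Form

/-- Sequents are finite sets of formulae. -/
abbrev Sequent := Finset Form

/-- Every member is a formula (no free `X`): a sequent of `L_Ω`. -/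
def ClosedSeq (Γ : Sequent) : Prop := ∀ C ∈ Γ, C.ClosedF

/-- A sequent of `L0`: every member is a `ν̃`-free formula. -/
def L0Seq (Γ : Sequent) : Prop := ∀ C ∈ Γ, C.IsL0 ∧ C.ClosedF

/-- `Γ` is `h`-positive: every `ν̃X.A` occurring in it has level `< h`. -/
def Positive (h : ℕ) (Γ : Sequent) : Prop :=
  ∀ C ∈ Γ, ∀ B : Form, Form.OccursIn (Form.nut B) C → Form.lev (Form.nut B) < h

/-- Every formula of the sequent has level `≤ k`. -/
def SeqLevLE (k : ℕ) (Γ : Sequent) : Prop := ∀ C ∈ Γ, C.lev ≤ k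

/-- The infinitary cut-free system `K_ω`. -/
inductive KDer : Sequent → Prop
  | ax (Γ : Sequent) (i : ℕ) :
      KDer (insert (Form.atom i) (insert (Form.natom i) Γ))
  | orR (Γ : Sequent) (A B : Form) :
      KDer (insert A (insert B Γ)) → KDer (insert (Form.or A B) Γ)
  | andR (Γ : Sequent) (A B : Form) :
      KDer (insert A Γ) → KDer (insert B Γ) → KDer (insert (Form.and A B) Γ)
  | boxR (Γ S : Sequent) (A : Form) :
      KDer (insert A Γ) → KDer (Γ.image Form.dia ∪ insert (Form.box A) S)
  | clo (Γ : Sequent) (A : Form) :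
      KDer (insert (Form.subst A (Form.mu A)) Γ) → KDer (insert (Form.mu A) Γ)
  | nuR (Γ : Sequent) (A : Form) :
      (∀ i : ℕ, KDer (insert (Form.iter A i) Γ)) → KDer (insert (Form.nu A) Γ)

/-- The finitary system `M` (with induction rule and cut). -/
inductive MDer : Sequent → Prop
  | ax (Γ : Sequent) (i : ℕ) :
      MDer (insert (Form.atom i) (insert (Form.natom i) Γ))
  | axMu (Γ : Sequent) (A : Form) :
      MDer (insert (Form.mu A) (insert (Form.compl (Form.mu A)) Γ))
  | orR (Γ : Sequent) (A B : Form) :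
      MDer (insert A (insert B Γ)) → MDer (insert (Form.or A B) Γ)
  | andR (Γ : Sequent) (A B : Form) :
      MDer (insert A Γ) → MDer (insert B Γ) → MDer (insert (Form.and A B) Γ)
  | boxR (Γ S : Sequent) (A : Form) :
      MDer (insert A Γ) → MDer (Γ.image Form.dia ∪ insert (Form.box A) S)
  | clo (Γ : Sequent) (A : Form) :
      MDer (insert (Form.subst A (Form.mu A)) Γ) → MDer (insert (Form.mu A) Γ)
  | ind (A B : Form) :
      MDer (insert (Form.compl (Form.subst A B)) {B}) →
      MDer (insert (Form.compl (Form.mu A)) {B})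
  | cut (Γ : Sequent) (A : Form) :
      A.IsL0 → A.ClosedF →
      MDer (insert A Γ) → MDer (insert (Form.compl A) Γ) → MDer Γ

/-- The finitary system `M`, with the extra recording that every sequent occurring
in the proof (i.e. the conclusion of every subderivation) has level `≤ k`. -/
inductive MDerB (k : ℕ) : Sequent → Prop
  | ax (Γ : Sequent) (i : ℕ) :
      SeqLevLE k (insert (Form.atom i) (insert (Form.natom i) Γ)) →
      MDerB k (insert (Form.atom i) (insert (Form.natom i) Γ))
  | axMu (Γ : Sequent) (A : Form) :
      SeqLevLE k (insert (Form.mu A) (insert (Form.compl (Form.mu A)) Γ)) →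
      MDerB k (insert (Form.mu A) (insert (Form.compl (Form.mu A)) Γ))
  | orR (Γ : Sequent) (A B : Form) :
      SeqLevLE k (insert (Form.or A B) Γ) →
      MDerB k (insert A (insert B Γ)) → MDerB k (insert (Form.or A B) Γ)
  | andR (Γ : Sequent) (A B : Form) :
      SeqLevLE k (insert (Form.and A B) Γ) →
      MDerB k (insert A Γ) → MDerB k (insert B Γ) → MDerB k (insert (Form.and A B) Γ)
  | boxR (Γ S : Sequent) (A : Form) :
      SeqLevLE k (Γ.image Form.dia ∪ insert (Form.box A) S) →
      MDerB k (insert A Γ) → MDerB k (Γ.image Form.dia ∪ insert (Form.box A) S)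
  | clo (Γ : Sequent) (A : Form) :
      SeqLevLE k (insert (Form.mu A) Γ) →
      MDerB k (insert (Form.subst A (Form.mu A)) Γ) → MDerB k (insert (Form.mu A) Γ)
  | ind (A B : Form) :
      SeqLevLE k (insert (Form.compl (Form.mu A)) {B}) →
      MDerB k (insert (Form.compl (Form.subst A B)) {B}) →
      MDerB k (insert (Form.compl (Form.mu A)) {B})
  | cut (Γ : Sequent) (A : Form) :
      A.IsL0 → A.ClosedF → SeqLevLE k Γ →
      MDerB k (insert A Γ) → MDerB k (insert (Form.compl A) Γ) → MDerB k Γ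

/-- Derivations of the system `M^Ω_k`, relative to a predicate `prev` expressing
cut-free derivability in `M^Ω_{k-1}`.  The boolean index is `true` if instances
of cut are allowed and `false` for cut-free derivations. -/
inductive OmDerAux (prev : Sequent → Prop) (k : ℕ) : Bool → Sequent → Prop
  | ax (c : Bool) (Γ : Sequent) (i : ℕ) :
      OmDerAux prev k c (insert (Form.atom i) (insert (Form.natom i) Γ))
  | orR (c : Bool) (Γ : Sequent) (A B : Form) :
      OmDerAux prev k c (insert A (insert B Γ)) →
      OmDerAux prev k c (insert (Form.or A B) Γ)
  | andR (c : Bool) (Γ : Sequent) (A B : Form) :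
      OmDerAux prev k c (insert A Γ) → OmDerAux prev k c (insert B Γ) →
      OmDerAux prev k c (insert (Form.and A B) Γ)
  | boxR (c : Bool) (Γ S : Sequent) (A : Form) :
      OmDerAux prev k c (insert A Γ) →
      OmDerAux prev k c (Γ.image Form.dia ∪ insert (Form.box A) S)
  | clo (c : Bool) (Γ : Sequent) (A : Form) :
      OmDerAux prev k c (insert (Form.subst A (Form.mu A)) Γ) →
      OmDerAux prev k c (insert (Form.mu A) Γ)
  | nuR (c : Bool) (Γ : Sequent) (A : Form) :
      (∀ i : ℕ, OmDerAux prev k c (insert (Form.iter A i) Γ)) →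
      OmDerAux prev k c (insert (Form.nu A) Γ)
  | cut (Γ : Sequent) (A : Form) :
      A.IsL0 → A.ClosedF → A.lev ≤ k →
      OmDerAux prev k true (insert (Form.prime A) Γ) →
      OmDerAux prev k true (insert (Form.prime (Form.compl A)) Γ) →
      OmDerAux prev k true Γ
  | omega (c : Bool) (Γ : Sequent) (A : Form) (h : ℕ) :
      1 ≤ h → h ≤ k → A.IsL0 →
      Form.lev (Form.prime (Form.compl (Form.mu A))) = h →
      (∀ Δ : Sequent, ClosedSeq Δ → Positive h Δ →
        prev (insert (Form.prime (Form.mu A)) Δ) → OmDerAux prev k c (Δ ∪ Γ)) →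
      OmDerAux prev k c (insert (Form.prime (Form.compl (Form.mu A))) Γ)
  | omegaT (c : Bool) (Γ : Sequent) (A : Form) (h : ℕ) :
      1 ≤ h → h ≤ k → A.IsL0 →
      Form.lev (Form.prime (Form.compl (Form.mu A))) = h →
      OmDerAux prev k c (insert (Form.prime (Form.mu A)) Γ) →
      (∀ Δ : Sequent, ClosedSeq Δ → Positive h Δ →
        prev (insert (Form.prime (Form.mu A)) Δ) → OmDerAux prev k c (Δ ∪ Γ)) →
      OmDerAux prev k c Γ

/-- `OmProv k c Γ`: the sequent `Γ` is derivable in `M^Ω_k`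
(cut-free when `c = false`). -/
def OmProv : ℕ → Bool → Sequent → Prop
  | 0     => OmDerAux (fun _ => False) 0
  | k + 1 => OmDerAux (fun Δ => OmProv k false Δ) (k + 1)



section AuxLemmas
open Form

namespace Form

theorem lev_prime : ∀ A : Form, (prime A).lev = A.lev := by
  intro A; induction A <;> simp [prime, lev, *]

theorem lev_compl : ∀ A : Form, (compl A).lev = A.lev := by
  intro A; induction A <;> simp [compl, lev, *]

theorem isL0_compl : ∀ A : Form, A.IsL0 → (compl A).IsL0 := by
  intro A; induction A <;> simp [compl, IsL0, *] <;> tauto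

theorem compl_compl : ∀ A : Form, A.IsL0 → compl (compl A) = A := by
  intro A; induction A <;> simp [compl, IsL0, *] <;> tauto

theorem prime_subst : ∀ A B : Form, prime (subst A B) = subst (prime A) (prime B) := by
  intro A B; induction A <;> simp [prime, subst, *]

theorem lev_subst : ∀ A B : Form, (subst A B).lev ≤ max A.lev B.lev := by
  intro A B; induction A <;> simp [subst, lev, *] <;> omega

theorem isL0_subst : ∀ A B : Form, A.IsL0 → B.IsL0 → (subst A B).IsL0 := by
  intro A B; induction A <;> simp [subst, IsL0, *] <;> tauto

theorem closedF_subst : ∀ A B : Form, B.ClosedF → (subst A B).ClosedF := by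
  intro A B hB; induction A <;> simp [subst, ClosedF, *] <;> tauto

theorem closedF_prime : ∀ A : Form, A.ClosedF → (prime A).ClosedF := by
  intro A; induction A <;> simp [prime, ClosedF, *] <;> tauto

theorem isL0_top : (top : Form).IsL0 := by simp [top, IsL0]
theorem closedF_top : (top : Form).ClosedF := by simp [top, ClosedF]
theorem lev_top : (top : Form).lev = 0 := by simp [top, lev]

theorem lev_iter (A : Form) : ∀ i, (iter A i).lev ≤ A.lev := by
  intro i; induction i with
  | zero => simp [iter, lev_top]
  | succ i ih => have := lev_subst A (iter A i); simp [iter]; omega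

theorem isL0_iter (A : Form) (hA : A.IsL0) : ∀ i, (iter A i).IsL0 := by
  intro i; induction i with
  | zero => exact isL0_top
  | succ i ih => exact isL0_subst _ _ hA ih

theorem closedF_iter (A : Form) : ∀ i, (iter A i).ClosedF := by
  intro i; induction i with
  | zero => exact closedF_top
  | succ i ih => exact closedF_subst _ _ ih

theorem prime_ne_nu : ∀ A B : Form, prime A ≠ nu B := by
  intro A B; cases A <;> simp [prime]

/-- unprime: replace every `nut` (and `nu`) binder by `nu`. -/
def unp : Form → Form
  | atom i  => atom i
  | natom i => natom i
  | var     => var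
  | and A B => and (unp A) (unp B)
  | or A B  => or (unp A) (unp B)
  | box A   => box (unp A)
  | dia A   => dia (unp A)
  | mu A    => mu (unp A)
  | nu A    => nu (unp A)
  | nut A   => nu (unp A)

theorem unp_prime : ∀ A : Form, A.IsL0 → unp (prime A) = A := by
  intro A; induction A <;> simp [prime, unp, IsL0, *] <;> tauto

theorem prime_inj : ∀ A : Form, A.IsL0 → ∀ B : Form, B.IsL0 → prime A = prime B → A = B := by
  intro A hA B hB h
  rw [← unp_prime A hA, h, unp_prime B hB]

theorem occ_lev : ∀ C G : Form, OccursIn G C → G.lev ≤ C.lev := by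
  intro C
  induction C <;> intro G h <;> simp [OccursIn] at h
  case atom i => subst h; exact le_rfl
  case natom i => subst h; exact le_rfl
  case var => subst h; exact le_rfl
  case and A B ihA ihB =>
    rcases h with rfl | h | h
    · exact le_rfl
    · exact (ihA _ h).trans (by simp [lev])
    · exact (ihB _ h).trans (by simp [lev])
  case or A B ihA ihB =>
    rcases h with rfl | h | h
    · exact le_rfl
    · exact (ihA _ h).trans (by simp [lev])
    · exact (ihB _ h).trans (by simp [lev])
  case box A ihA =>
    rcases h with rfl | h
    · exact le_rfl
    · exact (ihA _ h).trans (by simp [lev])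
  case dia A ihA =>
    rcases h with rfl | h
    · exact le_rfl
    · exact (ihA _ h).trans (by simp [lev])
  case mu A ihA =>
    rcases h with rfl | h
    · exact le_rfl
    · exact (ihA _ h).trans (by simp [lev])
  case nu A ihA =>
    rcases h with rfl | h
    · exact le_rfl
    · exact (ihA _ h).trans (by simp [lev])
  case nut A ihA =>
    rcases h with rfl | h
    · exact le_rfl
    · exact (ihA _ h).trans (by simp [lev])

theorem occ_subst : ∀ A C X : Form, OccursIn (nut X) (subst A C) →
    OccursIn (nut X) A ∨ OccursIn (nut X) C := by
  intro A C X
  induction A <;> intro h <;> simp [subst, OccursIn] at h ⊢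
  case var => exact h
  case and A1 A2 ih1 ih2 =>
    rcases h with h | h
    · rcases ih1 h with h | h
      · exact Or.inl (Or.inl h)
      · exact Or.inr h
    · rcases ih2 h with h | h
      · exact Or.inl (Or.inr h)
      · exact Or.inr h
  case or A1 A2 ih1 ih2 =>
    rcases h with h | h
    · rcases ih1 h with h | h
      · exact Or.inl (Or.inl h)
      · exact Or.inr h
    · rcases ih2 h with h | h
      · exact Or.inl (Or.inr h)
      · exact Or.inr h
  case box A ih =>
    rcases ih h with h | h
    · exact Or.inl h
    · exact Or.inr h
  case dia A ih =>
    rcases ih h with h | h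
    · exact Or.inl h
    · exact Or.inr h
  case mu A ih => exact Or.inl h
  case nu A ih => exact Or.inl h
  case nut A ih => exact Or.inl h

theorem occ_top (X : Form) : ¬ OccursIn (nut X) top := by
  simp [top, OccursIn]

theorem occ_iter (A : Form) : ∀ i (X : Form), OccursIn (nut X) (iter A i) →
    OccursIn (nut X) A := by
  intro i; induction i with
  | zero => intro X h; exact absurd h (occ_top X)
  | succ i ih =>
    intro X h
    rcases occ_subst A (iter A i) X h with h | h
    · exact h
    · exact ih X h

end Form


open Form

theorem posF_of_lev {C : Form} {b : ℕ} (hb : C.lev < b) :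
    ∀ X : Form, OccursIn (nut X) C → (nut X).lev < b :=
  fun X hX => lt_of_le_of_lt (occ_lev _ _ hX) hb

theorem lev_Nform (A : Form) : (prime (compl (mu A))).lev = A.lev + 1 := by
  show (nut (prime (compl A))).lev = _
  simp [lev, lev_prime, lev_compl]

theorem posF_muprime {A : Form} {b : ℕ} (hb : A.lev < b) :
    ∀ X : Form, OccursIn (nut X) (prime (mu A)) → (nut X).lev < b := by
  intro X hX
  have hX2 : nut X = mu (prime A) ∨ OccursIn (nut X) (prime A) := hX
  have hX3 : OccursIn (nut X) (prime A) := by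
    rcases hX2 with h | h
    · exact absurd h (by simp)
    · exact h
  have h1 := occ_lev _ _ hX3
  rw [lev_prime] at h1
  exact lt_of_le_of_lt h1 hb

theorem positive_mono {h h' : ℕ} (hle : h ≤ h') {Θ : Sequent} (hp : Positive h Θ) :
    Positive h' Θ := fun C hC B hB => lt_of_lt_of_le (hp C hC B hB) hle

theorem closedSeq_insert {a : Form} {Θ : Sequent} (ha : a.ClosedF) (hΘ : ClosedSeq Θ) :
    ClosedSeq (insert a Θ) := by
  intro C hC; rcases Finset.mem_insert.mp hC with rfl | hC
  · exact ha
  · exact hΘ C hC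

theorem closedSeq_union {Θ Ξ : Sequent} (h1 : ClosedSeq Θ) (h2 : ClosedSeq Ξ) :
    ClosedSeq (Θ ∪ Ξ) := by
  intro C hC; rcases Finset.mem_union.mp hC with hC | hC
  · exact h1 C hC
  · exact h2 C hC

theorem closedSeq_subset {Θ Ξ : Sequent} (hs : Ξ ⊆ Θ) (h : ClosedSeq Θ) : ClosedSeq Ξ :=
  fun C hC => h C (hs hC)

theorem positive_subset {h : ℕ} {Θ Ξ : Sequent} (hs : Ξ ⊆ Θ) (hp : Positive h Θ) :
    Positive h Ξ := fun C hC => hp C (hs hC)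

theorem positive_insert {h : ℕ} {a : Form} {Θ : Sequent}
    (ha : ∀ X : Form, OccursIn (nut X) a → (nut X).lev < h) (hp : Positive h Θ) :
    Positive h (insert a Θ) := by
  intro C hC X hX; rcases Finset.mem_insert.mp hC with rfl | hC
  · exact ha X hX
  · exact hp C hC X hX

theorem positive_union {h : ℕ} {Θ Ξ : Sequent} (h1 : Positive h Θ) (h2 : Positive h Ξ) :
    Positive h (Θ ∪ Ξ) := by
  intro C hC X hX; rcases Finset.mem_union.mp hC with hC | hC
  · exact h1 C hC X hX
  · exact h2 C hC X hX

/-- Weakening for `OmDerAux`. -/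
theorem weak {P : Sequent → Prop} {k : ℕ} {c : Bool} :
    ∀ {Θ : Sequent}, OmDerAux P k c Θ → ∀ {Θ' : Sequent}, Θ ⊆ Θ' → OmDerAux P k c Θ' := by
  intro Θ d
  induction d with
  | ax c Γ i =>
    intro Θ' hs
    have h2 : Form.natom i ∈ Θ' := hs (Finset.mem_insert_of_mem (Finset.mem_insert_self _ _))
    have h1 : Form.atom i ∈ Θ' := hs (Finset.mem_insert_self _ _)
    have := OmDerAux.ax (prev := P) (k := k) c Θ' i
    rwa [Finset.insert_eq_self.mpr h2, Finset.insert_eq_self.mpr h1] at this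
  | orR c Γ A B prem ih =>
    intro Θ' hs
    have hAB : Form.or A B ∈ Θ' := hs (Finset.mem_insert_self _ _)
    have hΓ : Γ ⊆ Θ' := fun x hx => hs (Finset.mem_insert_of_mem hx)
    have := OmDerAux.orR c Θ' A B (ih (Finset.insert_subset_insert _ (Finset.insert_subset_insert _ hΓ)))
    rwa [Finset.insert_eq_self.mpr hAB] at this
  | andR c Γ A B p1 p2 ih1 ih2 =>
    intro Θ' hs
    have hAB : Form.and A B ∈ Θ' := hs (Finset.mem_insert_self _ _)
    have hΓ : Γ ⊆ Θ' := fun x hx => hs (Finset.mem_insert_of_mem hx)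
    have := OmDerAux.andR c Θ' A B (ih1 (Finset.insert_subset_insert _ hΓ))
      (ih2 (Finset.insert_subset_insert _ hΓ))
    rwa [Finset.insert_eq_self.mpr hAB] at this
  | boxR c Γ S A prem ih =>
    intro Θ' hs
    have hbox : Form.box A ∈ Θ' := hs (Finset.mem_union_right _ (Finset.mem_insert_self _ _))
    have hdia : Γ.image Form.dia ⊆ Θ' := fun x hx => hs (Finset.mem_union_left _ hx)
    have := OmDerAux.boxR c Γ Θ' A prem
    rwa [Finset.insert_eq_self.mpr hbox, Finset.union_eq_right.mpr hdia] at this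
  | clo c Γ A prem ih =>
    intro Θ' hs
    have hmu : Form.mu A ∈ Θ' := hs (Finset.mem_insert_self _ _)
    have hΓ : Γ ⊆ Θ' := fun x hx => hs (Finset.mem_insert_of_mem hx)
    have := OmDerAux.clo c Θ' A (ih (Finset.insert_subset_insert _ hΓ))
    rwa [Finset.insert_eq_self.mpr hmu] at this
  | nuR c Γ A prem ih =>
    intro Θ' hs
    have hnu : Form.nu A ∈ Θ' := hs (Finset.mem_insert_self _ _)
    have hΓ : Γ ⊆ Θ' := fun x hx => hs (Finset.mem_insert_of_mem hx)
    have := OmDerAux.nuR c Θ' A (fun i => ih i (Finset.insert_subset_insert _ hΓ))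
    rwa [Finset.insert_eq_self.mpr hnu] at this
  | cut Γ A h0 h1 h2 p1 p2 ih1 ih2 =>
    intro Θ' hs
    exact OmDerAux.cut Θ' A h0 h1 h2 (ih1 (Finset.insert_subset_insert _ hs))
      (ih2 (Finset.insert_subset_insert _ hs))
  | omega c Γ A h hh1 hhk hA hlev prov ih =>
    intro Θ' hs
    have hN : Form.prime (Form.compl (Form.mu A)) ∈ Θ' := hs (Finset.mem_insert_self _ _)
    have hΓ : Γ ⊆ Θ' := fun x hx => hs (Finset.mem_insert_of_mem hx)
    have := OmDerAux.omega c Θ' A h hh1 hhk hA hlev (fun Δ h1 h2 h3 =>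
      ih Δ h1 h2 h3 (Finset.union_subset_union_right hΓ))
    rwa [Finset.insert_eq_self.mpr hN] at this
  | omegaT c Γ A h hh1 hhk hA hlev p1 prov ih1 ihp =>
    intro Θ' hs
    exact OmDerAux.omegaT c Θ' A h hh1 hhk hA hlev
      (ih1 (Finset.insert_subset_insert _ hs))
      (fun Δ h1 h2 h3 => ihp Δ h1 h2 h3 (Finset.union_subset_union_right hs))

/-- The `prev` predicate used at level `m`. -/
def prevOf : ℕ → Sequent → Prop
  | 0 => fun _ => False
  | k + 1 => fun Δ => OmProv k false Δ

theorem omprov (m : ℕ) (c : Bool) (Θ : Sequent) :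
    OmProv m c Θ ↔ OmDerAux (prevOf m) m c Θ := by
  cases m <;> exact Iff.rfl

theorem prevOf_elim {j : ℕ} {X : Sequent} (h : prevOf j X) :
    1 ≤ j ∧ OmProv (j - 1) false X := by
  cases j with
  | zero => exact h.elim
  | succ j => exact ⟨by omega, h⟩

def MonoP (m : ℕ) : Prop := ∀ Θ : Sequent, OmProv m false Θ → OmProv (m + 1) false Θ

theorem monoChain {m : ℕ} (mlt : ∀ j, j < m → MonoP j) :
    ∀ {a b : ℕ}, a ≤ b → b ≤ m → ∀ {Θ : Sequent}, OmProv a false Θ → OmProv b false Θ := by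
  intro a b hab
  induction hab with
  | refl => intro _ _ h; exact h
  | @step b hb ih =>
    intro hbm Θ h
    exact mlt b (by omega) Θ (ih (by omega) h)

/-- Collapsing: a cut-free derivation at level `m` of an `hp`-positive closed sequent
can be collapsed to level `hp - 1`. -/
theorem collapse (m : ℕ) (mlt : ∀ j, j < m → MonoP j) :
    ∀ (c : Bool) (Θ : Sequent), OmDerAux (prevOf m) m c Θ → c = false →
    ∀ hp : ℕ, 1 ≤ hp → hp ≤ m → ClosedSeq Θ → Positive hp Θ →
    OmProv (hp - 1) false Θ := by
  intro c Θ d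
  induction d with
  | ax c Γ i =>
    intro _ hp _ _ _ _
    exact (omprov _ _ _).mpr (OmDerAux.ax false Γ i)
  | orR c Γ A B prem ih =>
    intro hc hp hp1 hpm hcl hpos
    have hAB : Form.or A B ∈ insert (Form.or A B) Γ := Finset.mem_insert_self _ _
    have hclAB : A.ClosedF ∧ B.ClosedF := hcl _ hAB
    have hcl' : ClosedSeq (insert A (insert B Γ)) :=
      closedSeq_insert hclAB.1 (closedSeq_insert hclAB.2
        (closedSeq_subset (fun x hx => Finset.mem_insert_of_mem hx) hcl))
    have hpos' : Positive hp (insert A (insert B Γ)) := by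
      refine positive_insert (fun X hX => hpos _ hAB X (Or.inr (Or.inl hX)))
        (positive_insert (fun X hX => hpos _ hAB X (Or.inr (Or.inr hX)))
        (positive_subset (fun x hx => Finset.mem_insert_of_mem hx) hpos))
    exact (omprov _ _ _).mpr (OmDerAux.orR false Γ A B
      ((omprov _ _ _).mp (ih hc hp hp1 hpm hcl' hpos')))
  | andR c Γ A B p1 p2 ih1 ih2 =>
    intro hc hp hp1 hpm hcl hpos
    have hAB : Form.and A B ∈ insert (Form.and A B) Γ := Finset.mem_insert_self _ _
    have hclAB : A.ClosedF ∧ B.ClosedF := hcl _ hAB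
    have hrest : ClosedSeq Γ := closedSeq_subset (fun x hx => Finset.mem_insert_of_mem hx) hcl
    have hposr : Positive hp Γ := positive_subset (fun x hx => Finset.mem_insert_of_mem hx) hpos
    exact (omprov _ _ _).mpr (OmDerAux.andR false Γ A B
      ((omprov _ _ _).mp (ih1 hc hp hp1 hpm (closedSeq_insert hclAB.1 hrest)
        (positive_insert (fun X hX => hpos _ hAB X (Or.inr (Or.inl hX))) hposr)))
      ((omprov _ _ _).mp (ih2 hc hp hp1 hpm (closedSeq_insert hclAB.2 hrest)
        (positive_insert (fun X hX => hpos _ hAB X (Or.inr (Or.inr hX))) hposr))))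
  | boxR c Γ S A prem ih =>
    intro hc hp hp1 hpm hcl hpos
    have hbox : Form.box A ∈ Γ.image Form.dia ∪ insert (Form.box A) S :=
      Finset.mem_union_right _ (Finset.mem_insert_self _ _)
    have hclA : A.ClosedF := hcl (Form.box A) hbox
    have hclΓ : ClosedSeq Γ := by
      intro x hx
      have : Form.dia x ∈ Γ.image Form.dia ∪ insert (Form.box A) S :=
        Finset.mem_union_left _ (Finset.mem_image_of_mem _ hx)
      exact hcl (Form.dia x) this
    have hposΓ : Positive hp Γ := by
      intro x hx X hX
      have hmem : Form.dia x ∈ Γ.image Form.dia ∪ insert (Form.box A) S :=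
        Finset.mem_union_left _ (Finset.mem_image_of_mem _ hx)
      exact hpos _ hmem X (Or.inr hX)
    exact (omprov _ _ _).mpr (OmDerAux.boxR false Γ S A
      ((omprov _ _ _).mp (ih hc hp hp1 hpm (closedSeq_insert hclA hclΓ)
        (positive_insert (fun X hX => hpos _ hbox X (Or.inr hX)) hposΓ))))
  | clo c Γ A prem ih =>
    intro hc hp hp1 hpm hcl hpos
    have hmu : Form.mu A ∈ insert (Form.mu A) Γ := Finset.mem_insert_self _ _
    have hrest : ClosedSeq Γ := closedSeq_subset (fun x hx => Finset.mem_insert_of_mem hx) hcl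
    have hposr : Positive hp Γ := positive_subset (fun x hx => Finset.mem_insert_of_mem hx) hpos
    have hposS : ∀ X : Form, OccursIn (nut X) (subst A (Form.mu A)) → (nut X).lev < hp := by
      intro X hX
      rcases occ_subst A (Form.mu A) X hX with h | h
      · exact hpos _ hmu X (Or.inr h)
      · exact hpos _ hmu X h
    exact (omprov _ _ _).mpr (OmDerAux.clo false Γ A
      ((omprov _ _ _).mp (ih hc hp hp1 hpm
        (closedSeq_insert (closedF_subst A (Form.mu A) trivial) hrest)
        (positive_insert hposS hposr))))
  | nuR c Γ A prem ih =>
    intro hc hp hp1 hpm hcl hpos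
    have hnu : Form.nu A ∈ insert (Form.nu A) Γ := Finset.mem_insert_self _ _
    have hrest : ClosedSeq Γ := closedSeq_subset (fun x hx => Finset.mem_insert_of_mem hx) hcl
    have hposr : Positive hp Γ := positive_subset (fun x hx => Finset.mem_insert_of_mem hx) hpos
    refine (omprov _ _ _).mpr (OmDerAux.nuR false Γ A (fun i => ?_))
    refine (omprov _ _ _).mp (ih i hc hp hp1 hpm
      (closedSeq_insert (closedF_iter A i) hrest)
      (positive_insert (fun X hX => hpos _ hnu X (Or.inr (occ_iter A i X hX))) hposr))
  | cut Γ A h0 h1 h2 p1 p2 ih1 ih2 =>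
    intro hc
    exact absurd hc (by simp)
  | omega c Γ A h' hh1 hhk hA hlev prov ih =>
    intro hc hp hp1 hpm hcl hpos
    obtain ⟨m', rfl⟩ : ∃ m', m = m' + 1 := ⟨m - 1, by omega⟩
    have hNmem : Form.prime (Form.compl (Form.mu A)) ∈
        insert (Form.prime (Form.compl (Form.mu A))) Γ := Finset.mem_insert_self _ _
    have hNlt : h' < hp := by
      have hocc : OccursIn (nut (prime (compl A))) (Form.prime (Form.compl (Form.mu A))) :=
        Or.inl rfl
      have := hpos _ hNmem (prime (compl A)) hocc
      have hlev2 : (nut (prime (compl A))).lev = h' := hlev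
      omega
    have hlevA : A.lev + 1 = h' := by
      have := lev_Nform A; omega
    have hrest : ClosedSeq Γ := closedSeq_subset (fun x hx => Finset.mem_insert_of_mem hx) hcl
    have hposr : Positive hp Γ := positive_subset (fun x hx => Finset.mem_insert_of_mem hx) hpos
    refine (omprov _ _ _).mpr (OmDerAux.omega false Γ A h' hh1 (by omega) hA hlev ?_)
    intro Δ hclΔ hposΔ hprev
    obtain ⟨hj1, hX⟩ := prevOf_elim hprev
    have hXm : OmProv m' false (insert (Form.prime (Form.mu A)) Δ) :=
      monoChain mlt (by omega) (by omega) hX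
    have hpremise := prov Δ hclΔ hposΔ hXm
    have := ih Δ hclΔ hposΔ hXm hc hp hp1 hpm
      (closedSeq_union hclΔ hrest)
      (positive_union (positive_mono (by omega) hposΔ) hposr)
    exact (omprov _ _ _).mp this
  | omegaT c Γ A h' hh1 hhk hA hlev p1 prov ih1 ihp =>
    intro hc hp hp1 hpm hcl hpos
    obtain ⟨m', rfl⟩ : ∃ m', m = m' + 1 := ⟨m - 1, by omega⟩
    have hlevA : A.lev + 1 = h' := by
      have := lev_Nform A; omega
    by_cases hcase : h' < hp
    · -- rebuild omegaT at level hp - 1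
      have hclp : ClosedSeq (insert (Form.prime (Form.mu A)) Γ) :=
        closedSeq_insert trivial hcl
      have hposp : Positive hp (insert (Form.prime (Form.mu A)) Γ) :=
        positive_insert (posF_muprime (by omega)) hpos
      have hprem1 := ih1 hc hp hp1 hpm hclp hposp
      refine (omprov _ _ _).mpr (OmDerAux.omegaT false Γ A h' hh1 (by omega) hA hlev
        ((omprov _ _ _).mp hprem1) ?_)
      intro Δ hclΔ hposΔ hprev
      obtain ⟨hj1, hX⟩ := prevOf_elim hprev
      have hXm : OmProv m' false (insert (Form.prime (Form.mu A)) Δ) :=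
        monoChain mlt (by omega) (by omega) hX
      have := ihp Δ hclΔ hposΔ hXm hc hp hp1 hpm
        (closedSeq_union hclΔ hcl)
        (positive_union (positive_mono (by omega) hposΔ) hpos)
      exact (omprov _ _ _).mp this
    · -- hp ≤ h' : use the proviso with Δ := Γ
      push_neg at hcase
      have hclp : ClosedSeq (insert (Form.prime (Form.mu A)) Γ) :=
        closedSeq_insert trivial hcl
      have hposp : Positive h' (insert (Form.prime (Form.mu A)) Γ) :=
        positive_insert (posF_muprime (by omega)) (positive_mono hcase hpos)
      have hprem1 := ih1 hc h' hh1 hhk hclp hposp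
      have hXm : OmProv m' false (insert (Form.prime (Form.mu A)) Γ) :=
        monoChain mlt (by omega) (by omega) hprem1
      have hout := ihp Γ hcl (positive_mono hcase hpos) hXm hc hp hp1 hpm
        (by rw [Finset.union_self]; exact hcl)
        (by rw [Finset.union_self]; exact hpos)
      rwa [Finset.union_self] at hout

/-- Monotonicity in the index `k` of the systems `M^Ω_k`. -/
theorem monoP_all : ∀ m, MonoP m := by
  intro m
  induction m using Nat.strong_induction_on with
  | _ m mlt =>
    suffices H : ∀ (c : Bool) (Θ : Sequent), OmDerAux (prevOf m) m c Θ → c = false →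
        OmDerAux (prevOf (m + 1)) (m + 1) c Θ by
      intro Θ hd
      exact (omprov _ _ _).mpr (H false Θ ((omprov _ _ _).mp hd) rfl)
    intro c Θ d
    induction d with
    | ax c Γ i => intro _; exact OmDerAux.ax c Γ i
    | orR c Γ A B prem ih => intro hc; exact OmDerAux.orR c Γ A B (ih hc)
    | andR c Γ A B p1 p2 ih1 ih2 => intro hc; exact OmDerAux.andR c Γ A B (ih1 hc) (ih2 hc)
    | boxR c Γ S A prem ih => intro hc; exact OmDerAux.boxR c Γ S A (ih hc)
    | clo c Γ A prem ih => intro hc; exact OmDerAux.clo c Γ A (ih hc)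
    | nuR c Γ A prem ih => intro hc; exact OmDerAux.nuR c Γ A (fun i => ih i hc)
    | cut Γ A h0 h1 h2 p1 p2 ih1 ih2 => intro hc; exact absurd hc (by simp)
    | omega c Γ A h' hh1 hhk hA hlev prov ih =>
      intro hc
      obtain ⟨m', rfl⟩ : ∃ m', m = m' + 1 := ⟨m - 1, by omega⟩
      have hlevA : A.lev + 1 = h' := by
        have := lev_Nform A; omega
      refine OmDerAux.omega c Γ A h' hh1 (by omega) hA hlev ?_
      intro Δ hclΔ hposΔ hprev
      have hX : OmProv (m' + 1) false (insert (Form.prime (Form.mu A)) Δ) := hprev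
      have hcol := collapse (m' + 1) mlt false _ ((omprov _ _ _).mp hX) rfl h' hh1 hhk
        (closedSeq_insert trivial hclΔ)
        (positive_insert (posF_muprime (by omega)) hposΔ)
      have hXm : OmProv m' false (insert (Form.prime (Form.mu A)) Δ) :=
        monoChain mlt (by omega) (by omega) hcol
      exact ih Δ hclΔ hposΔ hXm hc
    | omegaT c Γ A h' hh1 hhk hA hlev p1 prov ih1 ihp =>
      intro hc
      obtain ⟨m', rfl⟩ : ∃ m', m = m' + 1 := ⟨m - 1, by omega⟩
      have hlevA : A.lev + 1 = h' := by
        have := lev_Nform A; omega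
      refine OmDerAux.omegaT c Γ A h' hh1 (by omega) hA hlev (ih1 hc) ?_
      intro Δ hclΔ hposΔ hprev
      have hX : OmProv (m' + 1) false (insert (Form.prime (Form.mu A)) Δ) := hprev
      have hcol := collapse (m' + 1) mlt false _ ((omprov _ _ _).mp hX) rfl h' hh1 hhk
        (closedSeq_insert trivial hclΔ)
        (positive_insert (posF_muprime (by omega)) hposΔ)
      have hXm : OmProv m' false (insert (Form.prime (Form.mu A)) Δ) :=
        monoChain mlt (by omega) (by omega) hcol
      exact ihp Δ hclΔ hposΔ hXm hc


theorem derAx {P : Sequent → Prop} {k : ℕ} {c : Bool} {i : ℕ} {Γ : Sequent}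
    (h1 : Form.atom i ∈ Γ) (h2 : Form.natom i ∈ Γ) : OmDerAux P k c Γ := by
  have := OmDerAux.ax (prev := P) (k := k) c (∅ : Sequent) i
  refine weak this ?_
  intro x hx
  rcases Finset.mem_insert.mp hx with rfl | hx
  · exact h1
  rcases Finset.mem_insert.mp hx with rfl | hx
  · exact h2
  · exact absurd hx (Finset.notMem_empty x)

theorem derTop {P : Sequent → Prop} {k : ℕ} {c : Bool} {Γ : Sequent}
    (h : Form.top ∈ Γ) : OmDerAux P k c Γ := by
  have := OmDerAux.orR (prev := P) (k := k) c Γ (atom 0) (natom 0)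
    (derAx (Finset.mem_insert_self _ _)
      (Finset.mem_insert_of_mem (Finset.mem_insert_self _ _)))
  refine weak this ?_
  intro x hx
  rcases Finset.mem_insert.mp hx with rfl | hx
  · exact h
  · exact hx

/-- Statement 5, doubly primed variant. -/
theorem V2 (A : Form) : ∀ (m : ℕ), A.IsL0 → A.lev ≤ m → ∀ B D : Form,
    OmProv m false {B, D} →
    OmProv m false {subst (prime (compl A)) B, subst (prime A) D} := by
  induction A with
  | atom i =>
    intro m _ _ B D _
    simp only [Form.compl, Form.prime, Form.subst]
    exact (omprov _ _ _).mpr (derAx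
      (Finset.mem_insert_of_mem (Finset.mem_singleton_self _)) (Finset.mem_insert_self _ _))
  | natom i =>
    intro m _ _ B D _
    simp only [Form.compl, Form.prime, Form.subst]
    exact (omprov _ _ _).mpr (derAx
      (Finset.mem_insert_self _ _) (Finset.mem_insert_of_mem (Finset.mem_singleton_self _)))
  | var =>
    intro m _ _ B D hd
    exact hd
  | and A1 A2 ih1 ih2 =>
    intro m hA hlev B D hd
    simp only [Form.compl, Form.prime, Form.subst]
    have hA' : A1.IsL0 ∧ A2.IsL0 := hA
    have hl : A1.lev ≤ m ∧ A2.lev ≤ m := by simp [lev] at hlev; omega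
    have w1 := (omprov _ _ _).mp (ih1 m hA'.1 hl.1 B D hd)
    have w2 := (omprov _ _ _).mp (ih2 m hA'.2 hl.2 B D hd)
    set L1 := subst (prime (compl A1)) B
    set L2 := subst (prime (compl A2)) B
    set R1 := subst (prime A1) D
    set R2 := subst (prime A2) D
    have d1 : OmDerAux (prevOf m) m false (insert L1 (insert L2 {R1})) :=
      weak w1 (by intro x hx; simp [Finset.mem_insert] at hx ⊢; tauto)
    have d2 : OmDerAux (prevOf m) m false (insert L1 (insert L2 {R2})) :=
      weak w2 (by intro x hx; simp [Finset.mem_insert] at hx ⊢; tauto)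
    have e1 := OmDerAux.orR false ({R1} : Sequent) L1 L2 d1
    have e2 := OmDerAux.orR false ({R2} : Sequent) L1 L2 d2
    have f1 : OmDerAux (prevOf m) m false (insert R1 {or L1 L2}) :=
      weak e1 (by intro x hx; simp [Finset.mem_insert] at hx ⊢; tauto)
    have f2 : OmDerAux (prevOf m) m false (insert R2 {or L1 L2}) :=
      weak e2 (by intro x hx; simp [Finset.mem_insert] at hx ⊢; tauto)
    have g := OmDerAux.andR false ({or L1 L2} : Sequent) R1 R2 f1 f2
    exact (omprov _ _ _).mpr (weak g (by intro x hx; simp [Finset.mem_insert] at hx ⊢; tauto))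
  | or A1 A2 ih1 ih2 =>
    intro m hA hlev B D hd
    simp only [Form.compl, Form.prime, Form.subst]
    have hA' : A1.IsL0 ∧ A2.IsL0 := hA
    have hl : A1.lev ≤ m ∧ A2.lev ≤ m := by simp [lev] at hlev; omega
    have w1 := (omprov _ _ _).mp (ih1 m hA'.1 hl.1 B D hd)
    have w2 := (omprov _ _ _).mp (ih2 m hA'.2 hl.2 B D hd)
    set L1 := subst (prime (compl A1)) B
    set L2 := subst (prime (compl A2)) B
    set R1 := subst (prime A1) D
    set R2 := subst (prime A2) D
    have d1 : OmDerAux (prevOf m) m false (insert R1 (insert R2 {L1})) :=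
      weak w1 (by intro x hx; simp [Finset.mem_insert] at hx ⊢; tauto)
    have d2 : OmDerAux (prevOf m) m false (insert R1 (insert R2 {L2})) :=
      weak w2 (by intro x hx; simp [Finset.mem_insert] at hx ⊢; tauto)
    have e1 := OmDerAux.orR false ({L1} : Sequent) R1 R2 d1
    have e2 := OmDerAux.orR false ({L2} : Sequent) R1 R2 d2
    have f1 : OmDerAux (prevOf m) m false (insert L1 {or R1 R2}) :=
      weak e1 (by intro x hx; simp [Finset.mem_insert] at hx ⊢; tauto)
    have f2 : OmDerAux (prevOf m) m false (insert L2 {or R1 R2}) :=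
      weak e2 (by intro x hx; simp [Finset.mem_insert] at hx ⊢; tauto)
    have g := OmDerAux.andR false ({or R1 R2} : Sequent) L1 L2 f1 f2
    exact (omprov _ _ _).mpr (weak g (by intro x hx; simp [Finset.mem_insert] at hx ⊢; tauto))
  | box A1 ih =>
    intro m hA hlev B D hd
    simp only [Form.compl, Form.prime, Form.subst]
    have w := (omprov _ _ _).mp (ih m hA (by simpa [lev] using hlev) B D hd)
    set L1 := subst (prime (compl A1)) B
    set R1 := subst (prime A1) D
    have d := OmDerAux.boxR false ({L1} : Sequent) (∅ : Sequent) R1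
      (weak w (by intro x hx; simp [Finset.mem_insert] at hx ⊢; tauto))
    exact (omprov _ _ _).mpr (weak d (by
      intro x hx
      simp [Finset.mem_union, Finset.mem_image, Finset.mem_insert] at hx ⊢
      tauto))
  | dia A1 ih =>
    intro m hA hlev B D hd
    simp only [Form.compl, Form.prime, Form.subst]
    have w := (omprov _ _ _).mp (ih m hA (by simpa [lev] using hlev) B D hd)
    set L1 := subst (prime (compl A1)) B
    set R1 := subst (prime A1) D
    have d := OmDerAux.boxR false ({R1} : Sequent) (∅ : Sequent) L1
      (weak w (by intro x hx; simp [Finset.mem_insert] at hx ⊢; tauto))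
    exact (omprov _ _ _).mpr (weak d (by
      intro x hx
      simp [Finset.mem_union, Finset.mem_image, Finset.mem_insert] at hx ⊢
      tauto))
  | mu A1 ih =>
    intro m hA hlev B D hd
    simp only [Form.compl, Form.prime, Form.subst]
    have hm1 : 1 ≤ m := by simp [lev] at hlev; omega
    obtain ⟨m', rfl⟩ : ∃ m', m = m' + 1 := ⟨m - 1, by omega⟩
    refine (omprov _ _ _).mpr (weak (OmDerAux.omega false ({mu (prime A1)} : Sequent) A1
      (A1.lev + 1) (by omega) (by simp [lev] at hlev; omega) hA (lev_Nform A1) ?_) ?_)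
    · intro Δ hcl hpos hprev
      have h2 : OmProv (m' + 1) false (insert (prime (mu A1)) Δ) := monoP_all m' _ hprev
      refine weak ((omprov _ _ _).mp h2) ?_
      intro x hx
      rcases Finset.mem_insert.mp hx with rfl | hx
      · exact Finset.mem_union_right _ (Finset.mem_singleton_self _)
      · exact Finset.mem_union_left _ hx
    · intro x hx
      rcases Finset.mem_insert.mp hx with rfl | hx
      · exact Finset.mem_insert_self _ _
      · simp only [Finset.mem_singleton] at hx; subst hx
        exact Finset.mem_insert_of_mem (Finset.mem_singleton_self _)
  | nu A1 ih =>
    intro m hA hlev B D hd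
    simp only [Form.compl, Form.prime, Form.subst]
    have hm1 : 1 ≤ m := by simp [lev] at hlev; omega
    obtain ⟨m', rfl⟩ : ∃ m', m = m' + 1 := ⟨m - 1, by omega⟩
    have hNe : prime (compl (mu (compl A1))) = nut (prime A1) := by
      show nut (prime (compl (compl A1))) = _
      rw [compl_compl A1 hA]
    have hlevN : (prime (compl (mu (compl A1)))).lev = A1.lev + 1 := by
      rw [lev_Nform, lev_compl]
    refine (omprov _ _ _).mpr (weak (OmDerAux.omega false
      ({mu (prime (compl A1))} : Sequent) (compl A1)
      (A1.lev + 1) (by omega) (by simp [lev] at hlev; omega) (isL0_compl A1 hA) hlevN ?_) ?_)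
    · intro Δ hcl hpos hprev
      have h2 : OmProv (m' + 1) false (insert (prime (mu (compl A1))) Δ) := monoP_all m' _ hprev
      refine weak ((omprov _ _ _).mp h2) ?_
      intro x hx
      rcases Finset.mem_insert.mp hx with rfl | hx
      · exact Finset.mem_union_right _ (Finset.mem_singleton_self _)
      · exact Finset.mem_union_left _ hx
    · intro x hx
      rcases Finset.mem_insert.mp hx with rfl | hx
      · rw [hNe]
        exact Finset.mem_insert_of_mem (Finset.mem_singleton_self _)
      · simp only [Finset.mem_singleton] at hx; subst hx
        exact Finset.mem_insert_self _ _
  | nut A1 ih =>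
    intro m hA
    exact absurd hA (by simp [IsL0])

/-- derivability of `(μX.A)', ((¬A)^i(⊤))'`. -/
theorem iterLem (A : Form) (m : ℕ) (hA : A.IsL0) (hlev : A.lev ≤ m) :
    ∀ i, OmProv m false {prime (mu A), prime (iter (compl A) i)} := by
  intro i
  induction i with
  | zero =>
    refine (omprov _ _ _).mpr (derTop ?_)
    exact Finset.mem_insert_of_mem (Finset.mem_singleton_self _)
  | succ i ihi =>
    have h2 := V2 (compl A) m (isL0_compl A hA) (by rw [lev_compl]; exact hlev)
      (prime (mu A)) (prime (iter (compl A) i)) ihi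
    rw [compl_compl A hA] at h2
    have e : subst (prime (compl A)) (prime (iter (compl A) i))
        = prime (iter (compl A) (i + 1)) := by
      rw [show iter (compl A) (i + 1) = subst (compl A) (iter (compl A) i) from rfl, prime_subst]
    rw [e] at h2
    have d := OmDerAux.clo (prev := prevOf m) (k := m) false
      ({prime (iter (compl A) (i + 1))} : Sequent) (prime A)
      (weak ((omprov _ _ _).mp h2)
        (by intro x hx; simp [Finset.mem_insert] at hx ⊢; tauto))
    exact (omprov _ _ _).mpr (weak d
      (by intro x hx; simp [Finset.mem_insert] at hx ⊢; tauto))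


/-- Unpriming: if `Θ ⊆ Δ ∪ T` is derivable where `T` consists of primes of `L0`
formulae, then `Δ ∪ unp(T)` is derivable (same level, cut-free). -/
theorem unprimeS (m : ℕ) :
    ∀ (c : Bool) (Θ : Sequent), OmDerAux (prevOf m) m c Θ → c = false →
    ∀ (Δ T : Sequent), Θ ⊆ Δ ∪ T → ClosedSeq Δ →
    (∀ F ∈ T, ∃ E : Form, E.IsL0 ∧ E.ClosedF ∧ F = prime E) →
    OmProv m false (Δ ∪ T.image unp) := by
  intro c Θ d
  induction d with
  | ax c Γ i =>
    intro _ Δ T hs hclΔ hT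
    have hmem : ∀ x : Form, unp x = x → x ∈ insert (atom i) (insert (natom i) Γ) →
        x ∈ Δ ∪ T.image unp := by
      intro x hfix hx
      rcases Finset.mem_union.mp (hs hx) with h | h
      · exact Finset.mem_union_left _ h
      · exact Finset.mem_union_right _ (hfix ▸ Finset.mem_image_of_mem unp h)
    exact (omprov _ _ _).mpr (derAx
      (hmem (atom i) rfl (Finset.mem_insert_self _ _))
      (hmem (natom i) rfl (Finset.mem_insert_of_mem (Finset.mem_insert_self _ _))))
  | orR c Γ A B prem ih =>
    intro hc Δ T hs hclΔ hT
    have hor : Form.or A B ∈ Δ ∪ T := hs (Finset.mem_insert_self _ _)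
    have hΓ : Γ ⊆ Δ ∪ T := fun x hx => hs (Finset.mem_insert_of_mem hx)
    by_cases hD : Form.or A B ∈ Δ
    · have hAB : A.ClosedF ∧ B.ClosedF := hclΔ _ hD
      have hres := ih hc (insert A (insert B Δ)) T
        (by
          intro x hx
          rcases Finset.mem_insert.mp hx with rfl | hx
          · exact Finset.mem_union_left _ (Finset.mem_insert_self _ _)
          rcases Finset.mem_insert.mp hx with rfl | hx
          · exact Finset.mem_union_left _ (Finset.mem_insert_of_mem (Finset.mem_insert_self _ _))
          · rcases Finset.mem_union.mp (hΓ hx) with h | h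
            · exact Finset.mem_union_left _
                (Finset.mem_insert_of_mem (Finset.mem_insert_of_mem h))
            · exact Finset.mem_union_right _ h)
        (closedSeq_insert hAB.1 (closedSeq_insert hAB.2 hclΔ)) hT
      have hres' : OmDerAux (prevOf m) m false
          (insert A (insert B (Δ ∪ T.image unp))) := by
        refine weak ((omprov _ _ _).mp hres) ?_
        intro x hx
        rcases Finset.mem_union.mp hx with h | h
        · rcases Finset.mem_insert.mp h with rfl | h
          · exact Finset.mem_insert_self _ _
          rcases Finset.mem_insert.mp h with rfl | h
          · exact Finset.mem_insert_of_mem (Finset.mem_insert_self _ _)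
          · exact Finset.mem_insert_of_mem (Finset.mem_insert_of_mem (Finset.mem_union_left _ h))
        · exact Finset.mem_insert_of_mem (Finset.mem_insert_of_mem (Finset.mem_union_right _ h))
      have := OmDerAux.orR false (Δ ∪ T.image unp) A B hres'
      exact (omprov _ _ _).mpr
        (by rwa [Finset.insert_eq_self.mpr (Finset.mem_union_left _ hD)] at this)
    · have hTm : Form.or A B ∈ T := by
        rcases Finset.mem_union.mp hor with h | h
        · exact absurd h hD
        · exact h
      obtain ⟨E, hE0, hEc, hEe⟩ := hT _ hTm
      cases E with
      | or E1 E2 =>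
        have hE1 : prime E1 = A ∧ prime E2 = B := by
          have : Form.or (prime E1) (prime E2) = Form.or A B := hEe.symm
          exact ⟨by injection this, by injection (this : _)⟩
        obtain ⟨h1, h2⟩ := hE1
        have hE0' : E1.IsL0 ∧ E2.IsL0 := hE0
        have hEc' : E1.ClosedF ∧ E2.ClosedF := hEc
        have hres := ih hc Δ (insert A (insert B T))
          (by
            intro x hx
            rcases Finset.mem_insert.mp hx with rfl | hx
            · exact Finset.mem_union_right _ (Finset.mem_insert_self _ _)
            rcases Finset.mem_insert.mp hx with rfl | hx
            · exact Finset.mem_union_right _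
                (Finset.mem_insert_of_mem (Finset.mem_insert_self _ _))
            · rcases Finset.mem_union.mp (hΓ hx) with h | h
              · exact Finset.mem_union_left _ h
              · exact Finset.mem_union_right _
                  (Finset.mem_insert_of_mem (Finset.mem_insert_of_mem h)))
          hclΔ
          (by
            intro F hF
            rcases Finset.mem_insert.mp hF with rfl | hF
            · exact ⟨E1, hE0'.1, hEc'.1, h1.symm⟩
            rcases Finset.mem_insert.mp hF with rfl | hF
            · exact ⟨E2, hE0'.2, hEc'.2, h2.symm⟩
            · exact hT _ hF)
        have hres' : OmDerAux (prevOf m) m false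
            (insert E1 (insert E2 (Δ ∪ T.image unp))) := by
          refine weak ((omprov _ _ _).mp hres) ?_
          intro x hx
          rcases Finset.mem_union.mp hx with h | h
          · exact Finset.mem_insert_of_mem (Finset.mem_insert_of_mem (Finset.mem_union_left _ h))
          · obtain ⟨F, hF, rfl⟩ := Finset.mem_image.mp h
            rcases Finset.mem_insert.mp hF with rfl | hF
            · rw [← h1, unp_prime _ hE0'.1]; exact Finset.mem_insert_self _ _
            rcases Finset.mem_insert.mp hF with rfl | hF
            · rw [← h2, unp_prime _ hE0'.2]
              exact Finset.mem_insert_of_mem (Finset.mem_insert_self _ _)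
            · exact Finset.mem_insert_of_mem (Finset.mem_insert_of_mem
                (Finset.mem_union_right _ (Finset.mem_image_of_mem unp hF)))
        have hfin := OmDerAux.orR false (Δ ∪ T.image unp) E1 E2 hres'
        have hmem : Form.or E1 E2 ∈ Δ ∪ T.image unp := by
          refine Finset.mem_union_right _ (Finset.mem_image.mpr ⟨Form.or A B, hTm, ?_⟩)
          show Form.or (unp A) (unp B) = Form.or E1 E2
          rw [← h1, ← h2, unp_prime _ hE0'.1, unp_prime _ hE0'.2]
        exact (omprov _ _ _).mpr (by rwa [Finset.insert_eq_self.mpr hmem] at hfin)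
      | atom j => exact absurd hEe (by simp [prime])
      | natom j => exact absurd hEe (by simp [prime])
      | var => exact absurd hEe (by simp [prime])
      | and E1 E2 => exact absurd hEe (by simp [prime])
      | box E1 => exact absurd hEe (by simp [prime])
      | dia E1 => exact absurd hEe (by simp [prime])
      | mu E1 => exact absurd hEe (by simp [prime])
      | nu E1 => exact absurd hEe (by simp [prime])
      | nut E1 => exact absurd hE0 (by simp [IsL0])
  | andR c Γ A B p1 p2 ih1 ih2 =>
    intro hc Δ T hs hclΔ hT
    have hand : Form.and A B ∈ Δ ∪ T := hs (Finset.mem_insert_self _ _)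
    have hΓ : Γ ⊆ Δ ∪ T := fun x hx => hs (Finset.mem_insert_of_mem hx)
    by_cases hD : Form.and A B ∈ Δ
    · have hAB : A.ClosedF ∧ B.ClosedF := hclΔ _ hD
      have sub1 : insert A Γ ⊆ insert A Δ ∪ T := by
        intro x hx
        rcases Finset.mem_insert.mp hx with rfl | hx
        · exact Finset.mem_union_left _ (Finset.mem_insert_self _ _)
        · rcases Finset.mem_union.mp (hΓ hx) with h | h
          · exact Finset.mem_union_left _ (Finset.mem_insert_of_mem h)
          · exact Finset.mem_union_right _ h
      have sub2 : insert B Γ ⊆ insert B Δ ∪ T := by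
        intro x hx
        rcases Finset.mem_insert.mp hx with rfl | hx
        · exact Finset.mem_union_left _ (Finset.mem_insert_self _ _)
        · rcases Finset.mem_union.mp (hΓ hx) with h | h
          · exact Finset.mem_union_left _ (Finset.mem_insert_of_mem h)
          · exact Finset.mem_union_right _ h
      have hr1 := ih1 hc (insert A Δ) T sub1 (closedSeq_insert hAB.1 hclΔ) hT
      have hr2 := ih2 hc (insert B Δ) T sub2 (closedSeq_insert hAB.2 hclΔ) hT
      have hr1' : OmDerAux (prevOf m) m false (insert A (Δ ∪ T.image unp)) := by
        refine weak ((omprov _ _ _).mp hr1) ?_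
        intro x hx
        rcases Finset.mem_union.mp hx with h | h
        · rcases Finset.mem_insert.mp h with rfl | h
          · exact Finset.mem_insert_self _ _
          · exact Finset.mem_insert_of_mem (Finset.mem_union_left _ h)
        · exact Finset.mem_insert_of_mem (Finset.mem_union_right _ h)
      have hr2' : OmDerAux (prevOf m) m false (insert B (Δ ∪ T.image unp)) := by
        refine weak ((omprov _ _ _).mp hr2) ?_
        intro x hx
        rcases Finset.mem_union.mp hx with h | h
        · rcases Finset.mem_insert.mp h with rfl | h
          · exact Finset.mem_insert_self _ _
          · exact Finset.mem_insert_of_mem (Finset.mem_union_left _ h)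
        · exact Finset.mem_insert_of_mem (Finset.mem_union_right _ h)
      have hfin := OmDerAux.andR false (Δ ∪ T.image unp) A B hr1' hr2'
      exact (omprov _ _ _).mpr
        (by rwa [Finset.insert_eq_self.mpr (Finset.mem_union_left _ hD)] at hfin)
    · have hTm : Form.and A B ∈ T := by
        rcases Finset.mem_union.mp hand with h | h
        · exact absurd h hD
        · exact h
      obtain ⟨E, hE0, hEc, hEe⟩ := hT _ hTm
      cases E with
      | and E1 E2 =>
        have h1 : prime E1 = A := by
          have : Form.and (prime E1) (prime E2) = Form.and A B := hEe.symm
          injection this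
        have h2 : prime E2 = B := by
          have : Form.and (prime E1) (prime E2) = Form.and A B := hEe.symm
          injection this
        have hE0' : E1.IsL0 ∧ E2.IsL0 := hE0
        have hEc' : E1.ClosedF ∧ E2.ClosedF := hEc
        have sub1 : insert A Γ ⊆ Δ ∪ insert A T := by
          intro x hx
          rcases Finset.mem_insert.mp hx with rfl | hx
          · exact Finset.mem_union_right _ (Finset.mem_insert_self _ _)
          · rcases Finset.mem_union.mp (hΓ hx) with h | h
            · exact Finset.mem_union_left _ h
            · exact Finset.mem_union_right _ (Finset.mem_insert_of_mem h)
        have sub2 : insert B Γ ⊆ Δ ∪ insert B T := by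
          intro x hx
          rcases Finset.mem_insert.mp hx with rfl | hx
          · exact Finset.mem_union_right _ (Finset.mem_insert_self _ _)
          · rcases Finset.mem_union.mp (hΓ hx) with h | h
            · exact Finset.mem_union_left _ h
            · exact Finset.mem_union_right _ (Finset.mem_insert_of_mem h)
        have hr1 := ih1 hc Δ (insert A T) sub1 hclΔ (by
          intro F hF
          rcases Finset.mem_insert.mp hF with rfl | hF
          · exact ⟨E1, hE0'.1, hEc'.1, h1.symm⟩
          · exact hT _ hF)
        have hr2 := ih2 hc Δ (insert B T) sub2 hclΔ (by
          intro F hF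
          rcases Finset.mem_insert.mp hF with rfl | hF
          · exact ⟨E2, hE0'.2, hEc'.2, h2.symm⟩
          · exact hT _ hF)
        have hr1' : OmDerAux (prevOf m) m false (insert E1 (Δ ∪ T.image unp)) := by
          refine weak ((omprov _ _ _).mp hr1) ?_
          intro x hx
          rcases Finset.mem_union.mp hx with h | h
          · exact Finset.mem_insert_of_mem (Finset.mem_union_left _ h)
          · obtain ⟨F, hF, rfl⟩ := Finset.mem_image.mp h
            rcases Finset.mem_insert.mp hF with rfl | hF
            · rw [← h1, unp_prime _ hE0'.1]; exact Finset.mem_insert_self _ _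
            · exact Finset.mem_insert_of_mem
                (Finset.mem_union_right _ (Finset.mem_image_of_mem unp hF))
        have hr2' : OmDerAux (prevOf m) m false (insert E2 (Δ ∪ T.image unp)) := by
          refine weak ((omprov _ _ _).mp hr2) ?_
          intro x hx
          rcases Finset.mem_union.mp hx with h | h
          · exact Finset.mem_insert_of_mem (Finset.mem_union_left _ h)
          · obtain ⟨F, hF, rfl⟩ := Finset.mem_image.mp h
            rcases Finset.mem_insert.mp hF with rfl | hF
            · rw [← h2, unp_prime _ hE0'.2]; exact Finset.mem_insert_self _ _
            · exact Finset.mem_insert_of_mem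
                (Finset.mem_union_right _ (Finset.mem_image_of_mem unp hF))
        have hfin := OmDerAux.andR false (Δ ∪ T.image unp) E1 E2 hr1' hr2'
        have hmem : Form.and E1 E2 ∈ Δ ∪ T.image unp := by
          refine Finset.mem_union_right _ (Finset.mem_image.mpr ⟨Form.and A B, hTm, ?_⟩)
          show Form.and (unp A) (unp B) = Form.and E1 E2
          rw [← h1, ← h2, unp_prime _ hE0'.1, unp_prime _ hE0'.2]
        exact (omprov _ _ _).mpr (by rwa [Finset.insert_eq_self.mpr hmem] at hfin)
      | atom j => exact absurd hEe (by simp [prime])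
      | natom j => exact absurd hEe (by simp [prime])
      | var => exact absurd hEe (by simp [prime])
      | or E1 E2 => exact absurd hEe (by simp [prime])
      | box E1 => exact absurd hEe (by simp [prime])
      | dia E1 => exact absurd hEe (by simp [prime])
      | mu E1 => exact absurd hEe (by simp [prime])
      | nu E1 => exact absurd hEe (by simp [prime])
      | nut E1 => exact absurd hE0 (by simp [IsL0])
  | clo c Γ A prem ih =>
    intro hc Δ T hs hclΔ hT
    have hmu : Form.mu A ∈ Δ ∪ T := hs (Finset.mem_insert_self _ _)
    have hΓ : Γ ⊆ Δ ∪ T := fun x hx => hs (Finset.mem_insert_of_mem hx)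
    by_cases hD : Form.mu A ∈ Δ
    · have hres := ih hc (insert (subst A (Form.mu A)) Δ) T
        (by
          intro x hx
          rcases Finset.mem_insert.mp hx with rfl | hx
          · exact Finset.mem_union_left _ (Finset.mem_insert_self _ _)
          · rcases Finset.mem_union.mp (hΓ hx) with h | h
            · exact Finset.mem_union_left _ (Finset.mem_insert_of_mem h)
            · exact Finset.mem_union_right _ h)
        (closedSeq_insert (closedF_subst A (Form.mu A) trivial) hclΔ) hT
      have hres' : OmDerAux (prevOf m) m false
          (insert (subst A (Form.mu A)) (Δ ∪ T.image unp)) := by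
        refine weak ((omprov _ _ _).mp hres) ?_
        intro x hx
        rcases Finset.mem_union.mp hx with h | h
        · rcases Finset.mem_insert.mp h with rfl | h
          · exact Finset.mem_insert_self _ _
          · exact Finset.mem_insert_of_mem (Finset.mem_union_left _ h)
        · exact Finset.mem_insert_of_mem (Finset.mem_union_right _ h)
      have hfin := OmDerAux.clo false (Δ ∪ T.image unp) A hres'
      exact (omprov _ _ _).mpr
        (by rwa [Finset.insert_eq_self.mpr (Finset.mem_union_left _ hD)] at hfin)
    · have hTm : Form.mu A ∈ T := by
        rcases Finset.mem_union.mp hmu with h | h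
        · exact absurd h hD
        · exact h
      obtain ⟨E, hE0, hEc, hEe⟩ := hT _ hTm
      cases E with
      | mu E0 =>
        have hE0' : E0.IsL0 := hE0
        have h1 : prime E0 = A := by
          have : Form.mu (prime E0) = Form.mu A := hEe.symm
          injection this
        have key : prime (subst E0 (Form.mu E0)) = subst A (Form.mu A) := by
          rw [prime_subst]
          show subst (prime E0) (Form.mu (prime E0)) = _
          rw [h1]
        have hres := ih hc Δ (insert (subst A (Form.mu A)) T)
          (by
            intro x hx
            rcases Finset.mem_insert.mp hx with rfl | hx
            · exact Finset.mem_union_right _ (Finset.mem_insert_self _ _)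
            · rcases Finset.mem_union.mp (hΓ hx) with h | h
              · exact Finset.mem_union_left _ h
              · exact Finset.mem_union_right _ (Finset.mem_insert_of_mem h))
          hclΔ
          (by
            intro F hF
            rcases Finset.mem_insert.mp hF with rfl | hF
            · exact ⟨subst E0 (Form.mu E0), isL0_subst _ _ hE0' hE0,
                closedF_subst _ _ trivial, key.symm⟩
            · exact hT _ hF)
        have hres' : OmDerAux (prevOf m) m false
            (insert (subst E0 (Form.mu E0)) (Δ ∪ T.image unp)) := by
          refine weak ((omprov _ _ _).mp hres) ?_
          intro x hx
          rcases Finset.mem_union.mp hx with h | h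
          · exact Finset.mem_insert_of_mem (Finset.mem_union_left _ h)
          · obtain ⟨F, hF, rfl⟩ := Finset.mem_image.mp h
            rcases Finset.mem_insert.mp hF with rfl | hF
            · rw [← key, unp_prime _ (isL0_subst _ _ hE0' hE0)]
              exact Finset.mem_insert_self _ _
            · exact Finset.mem_insert_of_mem
                (Finset.mem_union_right _ (Finset.mem_image_of_mem unp hF))
        have hfin := OmDerAux.clo false (Δ ∪ T.image unp) E0 hres'
        have hmem : Form.mu E0 ∈ Δ ∪ T.image unp := by
          refine Finset.mem_union_right _ (Finset.mem_image.mpr ⟨Form.mu A, hTm, ?_⟩)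
          show Form.mu (unp A) = Form.mu E0
          rw [← h1, unp_prime _ hE0']
        exact (omprov _ _ _).mpr (by rwa [Finset.insert_eq_self.mpr hmem] at hfin)
      | atom j => exact absurd hEe (by simp [prime])
      | natom j => exact absurd hEe (by simp [prime])
      | var => exact absurd hEe (by simp [prime])
      | and E1 E2 => exact absurd hEe (by simp [prime])
      | or E1 E2 => exact absurd hEe (by simp [prime])
      | box E1 => exact absurd hEe (by simp [prime])
      | dia E1 => exact absurd hEe (by simp [prime])
      | nu E1 => exact absurd hEe (by simp [prime])
      | nut E1 => exact absurd hE0 (by simp [IsL0])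
  | nuR c Γ A prem ih =>
    intro hc Δ T hs hclΔ hT
    have hnu : Form.nu A ∈ Δ ∪ T := hs (Finset.mem_insert_self _ _)
    have hΓ : Γ ⊆ Δ ∪ T := fun x hx => hs (Finset.mem_insert_of_mem hx)
    have hD : Form.nu A ∈ Δ := by
      rcases Finset.mem_union.mp hnu with h | h
      · exact h
      · obtain ⟨E, _, _, hEe⟩ := hT _ h
        exact absurd hEe.symm (prime_ne_nu E A)
    have hprems : ∀ i, OmDerAux (prevOf m) m false
        (insert (iter A i) (Δ ∪ T.image unp)) := by
      intro i
      have hres := ih i hc (insert (iter A i) Δ) T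
        (by
          intro x hx
          rcases Finset.mem_insert.mp hx with rfl | hx
          · exact Finset.mem_union_left _ (Finset.mem_insert_self _ _)
          · rcases Finset.mem_union.mp (hΓ hx) with h | h
            · exact Finset.mem_union_left _ (Finset.mem_insert_of_mem h)
            · exact Finset.mem_union_right _ h)
        (closedSeq_insert (closedF_iter A i) hclΔ) hT
      refine weak ((omprov _ _ _).mp hres) ?_
      intro x hx
      rcases Finset.mem_union.mp hx with h | h
      · rcases Finset.mem_insert.mp h with rfl | h
        · exact Finset.mem_insert_self _ _
        · exact Finset.mem_insert_of_mem (Finset.mem_union_left _ h)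
      · exact Finset.mem_insert_of_mem (Finset.mem_union_right _ h)
    have hfin := OmDerAux.nuR false (Δ ∪ T.image unp) A hprems
    exact (omprov _ _ _).mpr
      (by rwa [Finset.insert_eq_self.mpr (Finset.mem_union_left _ hD)] at hfin)
  | boxR c Γ S A prem ih =>
    intro hc Δ T hs hclΔ hT
    classical
    set Γd := Γ.filter (fun C => Form.dia C ∈ Δ) with hΓd
    set Γt := Γ.filter (fun C => Form.dia C ∉ Δ) with hΓt
    have hΓsplit : ∀ x ∈ Γ, x ∈ Γd ∨ x ∈ Γt := by
      intro x hx
      by_cases h : Form.dia x ∈ Δ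
      · exact Or.inl (Finset.mem_filter.mpr ⟨hx, h⟩)
      · exact Or.inr (Finset.mem_filter.mpr ⟨hx, h⟩)
    have hΓdcl : ClosedSeq Γd := by
      intro x hx
      have := Finset.mem_filter.mp hx
      exact hclΔ (Form.dia x) this.2
    have hΓtT : ∀ x ∈ Γt, Form.dia x ∈ T := by
      intro x hx
      have hx' := Finset.mem_filter.mp hx
      have : Form.dia x ∈ Δ ∪ T :=
        hs (Finset.mem_union_left _ (Finset.mem_image_of_mem _ hx'.1))
      rcases Finset.mem_union.mp this with h | h
      · exact absurd h hx'.2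
      · exact h
    have hΓtprime : ∀ x ∈ Γt, ∃ E0 : Form, E0.IsL0 ∧ E0.ClosedF ∧ x = prime E0 := by
      intro x hx
      obtain ⟨E, hE0, hEc, hEe⟩ := hT _ (hΓtT x hx)
      cases E with
      | dia E0 =>
        have hE0' : E0.IsL0 := hE0
        have hEc' : E0.ClosedF := hEc
        have h1 : prime E0 = x := by
          have : Form.dia (prime E0) = Form.dia x := hEe.symm
          injection this
        exact ⟨E0, hE0', hEc', h1.symm⟩
      | atom j => exact absurd hEe (by simp [prime])
      | natom j => exact absurd hEe (by simp [prime])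
      | var => exact absurd hEe (by simp [prime])
      | and E1 E2 => exact absurd hEe (by simp [prime])
      | or E1 E2 => exact absurd hEe (by simp [prime])
      | box E1 => exact absurd hEe (by simp [prime])
      | mu E1 => exact absurd hEe (by simp [prime])
      | nu E1 => exact absurd hEe (by simp [prime])
      | nut E1 => exact absurd hE0 (by simp [IsL0])
    have hdiaim : ∀ x ∈ Γt, Form.dia (unp x) ∈ T.image unp := by
      intro x hx
      refine Finset.mem_image.mpr ⟨Form.dia x, hΓtT x hx, rfl⟩
    have hboxmem : Form.box A ∈ Δ ∪ T :=
      hs (Finset.mem_union_right _ (Finset.mem_insert_self _ _))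
    have hSsub : S ⊆ Δ ∪ T := fun x hx =>
      hs (Finset.mem_union_right _ (Finset.mem_insert_of_mem hx))
    have hSgoal : ∀ x ∈ S, x ∈ Δ ∪ T.image unp ∨ True := fun _ _ => Or.inr trivial
    by_cases hD : Form.box A ∈ Δ
    · -- principal box formula comes from Δ
      have hres := ih hc (insert A Γd) Γt
        (by
          intro x hx
          rcases Finset.mem_insert.mp hx with rfl | hx
          · exact Finset.mem_union_left _ (Finset.mem_insert_self _ _)
          · rcases hΓsplit x hx with h | h
            · exact Finset.mem_union_left _ (Finset.mem_insert_of_mem h)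
            · exact Finset.mem_union_right _ h)
        (closedSeq_insert (hclΔ (Form.box A) hD) hΓdcl)
        (fun F hF => hΓtprime F hF)
      have hres' : OmDerAux (prevOf m) m false (insert A (Γd ∪ Γt.image unp)) := by
        refine weak ((omprov _ _ _).mp hres) ?_
        intro x hx
        rcases Finset.mem_union.mp hx with h | h
        · rcases Finset.mem_insert.mp h with rfl | h
          · exact Finset.mem_insert_self _ _
          · exact Finset.mem_insert_of_mem (Finset.mem_union_left _ h)
        · exact Finset.mem_insert_of_mem (Finset.mem_union_right _ h)
      have hfin := OmDerAux.boxR false (Γd ∪ Γt.image unp) (Δ ∪ T.image unp) A hres'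
      refine (omprov _ _ _).mpr (weak hfin ?_)
      intro x hx
      rcases Finset.mem_union.mp hx with h | h
      · obtain ⟨y, hy, rfl⟩ := Finset.mem_image.mp h
        rcases Finset.mem_union.mp hy with h' | h'
        · exact Finset.mem_union_left _ ((Finset.mem_filter.mp h').2)
        · obtain ⟨z, hz, rfl⟩ := Finset.mem_image.mp h'
          exact Finset.mem_union_right _ (hdiaim z hz)
      · rcases Finset.mem_insert.mp h with rfl | h
        · exact Finset.mem_union_left _ hD
        · exact h
    · have hTm : Form.box A ∈ T := by
        rcases Finset.mem_union.mp hboxmem with h | h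
        · exact absurd h hD
        · exact h
      obtain ⟨E, hE0, hEc, hEe⟩ := hT _ hTm
      cases E with
      | box E0 =>
        have hE0' : E0.IsL0 := hE0
        have h1 : prime E0 = A := by
          have : Form.box (prime E0) = Form.box A := hEe.symm
          injection this
        have hres := ih hc Γd (insert A Γt)
          (by
            intro x hx
            rcases Finset.mem_insert.mp hx with rfl | hx
            · exact Finset.mem_union_right _ (Finset.mem_insert_self _ _)
            · rcases hΓsplit x hx with h | h
              · exact Finset.mem_union_left _ h
              · exact Finset.mem_union_right _ (Finset.mem_insert_of_mem h))
          hΓdcl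
          (by
            intro F hF
            rcases Finset.mem_insert.mp hF with rfl | hF
            · exact ⟨E0, hE0', hEc, h1.symm⟩
            · exact hΓtprime F hF)
        have hres' : OmDerAux (prevOf m) m false (insert E0 (Γd ∪ Γt.image unp)) := by
          refine weak ((omprov _ _ _).mp hres) ?_
          intro x hx
          rcases Finset.mem_union.mp hx with h | h
          · exact Finset.mem_insert_of_mem (Finset.mem_union_left _ h)
          · obtain ⟨F, hF, rfl⟩ := Finset.mem_image.mp h
            rcases Finset.mem_insert.mp hF with rfl | hF
            · rw [← h1, unp_prime _ hE0']; exact Finset.mem_insert_self _ _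
            · exact Finset.mem_insert_of_mem
                (Finset.mem_union_right _ (Finset.mem_image_of_mem unp hF))
        have hfin := OmDerAux.boxR false (Γd ∪ Γt.image unp) (Δ ∪ T.image unp) E0 hres'
        refine (omprov _ _ _).mpr (weak hfin ?_)
        intro x hx
        rcases Finset.mem_union.mp hx with h | h
        · obtain ⟨y, hy, rfl⟩ := Finset.mem_image.mp h
          rcases Finset.mem_union.mp hy with h' | h'
          · exact Finset.mem_union_left _ ((Finset.mem_filter.mp h').2)
          · obtain ⟨z, hz, rfl⟩ := Finset.mem_image.mp h'
            exact Finset.mem_union_right _ (hdiaim z hz)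
        · rcases Finset.mem_insert.mp h with rfl | h
          · refine Finset.mem_union_right _ (Finset.mem_image.mpr ⟨Form.box A, hTm, ?_⟩)
            show Form.box (unp A) = Form.box E0
            rw [← h1, unp_prime _ hE0']
          · exact h
      | atom j => exact absurd hEe (by simp [prime])
      | natom j => exact absurd hEe (by simp [prime])
      | var => exact absurd hEe (by simp [prime])
      | and E1 E2 => exact absurd hEe (by simp [prime])
      | or E1 E2 => exact absurd hEe (by simp [prime])
      | dia E1 => exact absurd hEe (by simp [prime])
      | mu E1 => exact absurd hEe (by simp [prime])
      | nu E1 => exact absurd hEe (by simp [prime])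
      | nut E1 => exact absurd hE0 (by simp [IsL0])
  | cut Γ A h0 h1 h2 p1 p2 ih1 ih2 =>
    intro hc
    exact absurd hc (by simp)
  | omega c Γ A h' hh1 hhk hA hlev prov ih =>
    intro hc Δ T hs hclΔ hT
    have hNmem : Form.prime (Form.compl (Form.mu A)) ∈ Δ ∪ T := hs (Finset.mem_insert_self _ _)
    have hΓ : Γ ⊆ Δ ∪ T := fun x hx => hs (Finset.mem_insert_of_mem hx)
    obtain ⟨m'', rfl⟩ : ∃ m'', m = m'' + 1 := ⟨m - 1, by omega⟩
    have hlevA : A.lev + 1 = h' := by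
      have := lev_Nform A; omega
    by_cases hD : Form.prime (Form.compl (Form.mu A)) ∈ Δ
    · refine (omprov _ _ _).mpr ?_
      have hfin := OmDerAux.omega (prev := prevOf (m'' + 1)) (k := m'' + 1) false
        (Δ ∪ T.image unp) A h' hh1 hhk hA hlev ?_
      · rwa [Finset.insert_eq_self.mpr (Finset.mem_union_left _ hD)] at hfin
      · intro Δ2 hcl2 hpos2 hprev2
        have hout := prov Δ2 hcl2 hpos2 hprev2
        have := ih Δ2 hcl2 hpos2 hprev2 hc (Δ2 ∪ Δ) T
          (by
            intro x hx
            rcases Finset.mem_union.mp hx with h | h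
            · exact Finset.mem_union_left _ (Finset.mem_union_left _ h)
            · rcases Finset.mem_union.mp (hΓ h) with h | h
              · exact Finset.mem_union_left _ (Finset.mem_union_right _ h)
              · exact Finset.mem_union_right _ h)
          (closedSeq_union hcl2 hclΔ) hT
        refine weak ((omprov _ _ _).mp this) ?_
        intro x hx
        rcases Finset.mem_union.mp hx with h | h
        · rcases Finset.mem_union.mp h with h | h
          · exact Finset.mem_union_left _ h
          · exact Finset.mem_union_right _ (Finset.mem_union_left _ h)
        · exact Finset.mem_union_right _ (Finset.mem_union_right _ h)
    · have hTm : Form.prime (Form.compl (Form.mu A)) ∈ T := by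
        rcases Finset.mem_union.mp hNmem with h | h
        · exact absurd h hD
        · exact h
      obtain ⟨E, hE0, hEc, hEe⟩ := hT _ hTm
      have hE1 : E = Form.nu (Form.compl A) := by
        cases E with
        | nu E1 =>
          have : Form.nut (prime E1) = Form.nut (prime (Form.compl A)) := hEe.symm
          have h1 : prime E1 = prime (Form.compl A) := by injection this
          rw [prime_inj E1 hE0 (Form.compl A) (isL0_compl A hA) h1]
        | atom j => exact absurd hEe (by simp [prime, Form.compl])
        | natom j => exact absurd hEe (by simp [prime, Form.compl])
        | var => exact absurd hEe (by simp [prime, Form.compl])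
        | and E1 E2 => exact absurd hEe (by simp [prime, Form.compl])
        | or E1 E2 => exact absurd hEe (by simp [prime, Form.compl])
        | box E1 => exact absurd hEe (by simp [prime, Form.compl])
        | dia E1 => exact absurd hEe (by simp [prime, Form.compl])
        | mu E1 => exact absurd hEe (by simp [prime, Form.compl])
        | nut E1 => exact absurd hE0 (by simp [IsL0])
      subst hE1
      have hlevA' : A.lev ≤ m'' := by omega
      have hprems : ∀ i, OmDerAux (prevOf (m'' + 1)) (m'' + 1) false
          (insert (iter (Form.compl A) i) (Δ ∪ T.image unp)) := by
        intro i
        have hprev : prevOf (m'' + 1)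
            (insert (Form.prime (Form.mu A)) ({prime (iter (Form.compl A) i)} : Sequent)) :=
          iterLem A m'' hA hlevA' i
        have hcl2 : ClosedSeq ({prime (iter (Form.compl A) i)} : Sequent) := by
          intro x hx
          rw [Finset.mem_singleton] at hx
          subst hx
          exact closedF_prime _ (closedF_iter _ i)
        have hpos2 : Positive h' ({prime (iter (Form.compl A) i)} : Sequent) := by
          intro x hx X hX
          rw [Finset.mem_singleton] at hx
          subst hx
          have hle := occ_lev _ _ hX
          rw [lev_prime] at hle
          have hle2 := lev_iter (Form.compl A) i
          rw [lev_compl] at hle2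
          show (X.lev + 1) < h'
          have : (nut X).lev = X.lev + 1 := rfl
          omega
        have hout := prov _ hcl2 hpos2 hprev
        have hres := ih _ hcl2 hpos2 hprev hc Δ
          (insert (prime (iter (Form.compl A) i)) T)
          (by
            intro x hx
            rcases Finset.mem_union.mp hx with h | h
            · rw [Finset.mem_singleton] at h
              subst h
              exact Finset.mem_union_right _ (Finset.mem_insert_self _ _)
            · rcases Finset.mem_union.mp (hΓ h) with h | h
              · exact Finset.mem_union_left _ h
              · exact Finset.mem_union_right _ (Finset.mem_insert_of_mem h))
          hclΔ
          (by
            intro F hF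
            rcases Finset.mem_insert.mp hF with rfl | hF
            · exact ⟨iter (Form.compl A) i, isL0_iter _ (isL0_compl A hA) i,
                closedF_iter _ i, rfl⟩
            · exact hT _ hF)
        refine weak ((omprov _ _ _).mp hres) ?_
        intro x hx
        rcases Finset.mem_union.mp hx with h | h
        · exact Finset.mem_insert_of_mem (Finset.mem_union_left _ h)
        · obtain ⟨F, hF, rfl⟩ := Finset.mem_image.mp h
          rcases Finset.mem_insert.mp hF with rfl | hF
          · rw [unp_prime _ (isL0_iter _ (isL0_compl A hA) i)]
            exact Finset.mem_insert_self _ _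
          · exact Finset.mem_insert_of_mem
              (Finset.mem_union_right _ (Finset.mem_image_of_mem unp hF))
      have hfin := OmDerAux.nuR false (Δ ∪ T.image unp) (Form.compl A) hprems
      have hmem : Form.nu (Form.compl A) ∈ Δ ∪ T.image unp := by
        refine Finset.mem_union_right _ (Finset.mem_image.mpr ⟨_, hTm, ?_⟩)
        show Form.nu (unp (prime (Form.compl A))) = Form.nu (Form.compl A)
        rw [unp_prime _ (isL0_compl A hA)]
      exact (omprov _ _ _).mpr (by rwa [Finset.insert_eq_self.mpr hmem] at hfin)
  | omegaT c Γ A h' hh1 hhk hA hlev p1 prov ih1 ihp =>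
    intro hc Δ T hs hclΔ hT
    refine (omprov _ _ _).mpr ?_
    refine OmDerAux.omegaT false (Δ ∪ T.image unp) A h' hh1 hhk hA hlev ?_ ?_
    · -- premise Γ, (μA)'
      have hres := ih1 hc (insert (Form.prime (Form.mu A)) Δ) T
        (by
          intro x hx
          rcases Finset.mem_insert.mp hx with rfl | hx
          · exact Finset.mem_union_left _ (Finset.mem_insert_self _ _)
          · rcases Finset.mem_union.mp (hs hx) with h | h
            · exact Finset.mem_union_left _ (Finset.mem_insert_of_mem h)
            · exact Finset.mem_union_right _ h)
        (closedSeq_insert trivial hclΔ) hT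
      refine weak ((omprov _ _ _).mp hres) ?_
      intro x hx
      rcases Finset.mem_union.mp hx with h | h
      · rcases Finset.mem_insert.mp h with rfl | h
        · exact Finset.mem_insert_self _ _
        · exact Finset.mem_insert_of_mem (Finset.mem_union_left _ h)
      · exact Finset.mem_insert_of_mem (Finset.mem_union_right _ h)
    · intro Δ2 hcl2 hpos2 hprev2
      have := ihp Δ2 hcl2 hpos2 hprev2 hc (Δ2 ∪ Δ) T
        (by
          intro x hx
          rcases Finset.mem_union.mp hx with h | h
          · exact Finset.mem_union_left _ (Finset.mem_union_left _ h)
          · rcases Finset.mem_union.mp (hs h) with h | h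
            · exact Finset.mem_union_left _ (Finset.mem_union_right _ h)
            · exact Finset.mem_union_right _ h)
        (closedSeq_union hcl2 hclΔ) hT
      refine weak ((omprov _ _ _).mp this) ?_
      intro x hx
      rcases Finset.mem_union.mp hx with h | h
      · rcases Finset.mem_union.mp h with h | h
        · exact Finset.mem_union_left _ h
        · exact Finset.mem_union_right _ (Finset.mem_union_left _ h)
      · exact Finset.mem_union_right _ (Finset.mem_union_right _ h)


/-- Statement 5, generalised. -/
theorem V1 (k : ℕ) (A : Form) : A.IsL0 → A.lev ≤ k → ∀ B D : Form,
    OmProv k false {B, D} →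
    OmProv k false {subst (compl A) B, subst (prime A) D} := by
  induction A with
  | atom i =>
    intro _ _ B D _
    simp only [Form.compl, Form.prime, Form.subst]
    exact (omprov _ _ _).mpr (derAx
      (Finset.mem_insert_of_mem (Finset.mem_singleton_self _)) (Finset.mem_insert_self _ _))
  | natom i =>
    intro _ _ B D _
    simp only [Form.compl, Form.prime, Form.subst]
    exact (omprov _ _ _).mpr (derAx
      (Finset.mem_insert_self _ _) (Finset.mem_insert_of_mem (Finset.mem_singleton_self _)))
  | var =>
    intro _ _ B D hd
    exact hd
  | and A1 A2 ih1 ih2 =>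
    intro hA hlev B D hd
    simp only [Form.compl, Form.prime, Form.subst]
    have hA' : A1.IsL0 ∧ A2.IsL0 := hA
    have hl : A1.lev ≤ k ∧ A2.lev ≤ k := by simp [lev] at hlev; omega
    have w1 := (omprov _ _ _).mp (ih1 hA'.1 hl.1 B D hd)
    have w2 := (omprov _ _ _).mp (ih2 hA'.2 hl.2 B D hd)
    set L1 := subst (compl A1) B
    set L2 := subst (compl A2) B
    set R1 := subst (prime A1) D
    set R2 := subst (prime A2) D
    have d1 : OmDerAux (prevOf k) k false (insert L1 (insert L2 {R1})) :=
      weak w1 (by intro x hx; simp [Finset.mem_insert] at hx ⊢; tauto)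
    have d2 : OmDerAux (prevOf k) k false (insert L1 (insert L2 {R2})) :=
      weak w2 (by intro x hx; simp [Finset.mem_insert] at hx ⊢; tauto)
    have e1 := OmDerAux.orR false ({R1} : Sequent) L1 L2 d1
    have e2 := OmDerAux.orR false ({R2} : Sequent) L1 L2 d2
    have f1 : OmDerAux (prevOf k) k false (insert R1 {or L1 L2}) :=
      weak e1 (by intro x hx; simp [Finset.mem_insert] at hx ⊢; tauto)
    have f2 : OmDerAux (prevOf k) k false (insert R2 {or L1 L2}) :=
      weak e2 (by intro x hx; simp [Finset.mem_insert] at hx ⊢; tauto)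
    have g := OmDerAux.andR false ({or L1 L2} : Sequent) R1 R2 f1 f2
    exact (omprov _ _ _).mpr (weak g (by intro x hx; simp [Finset.mem_insert] at hx ⊢; tauto))
  | or A1 A2 ih1 ih2 =>
    intro hA hlev B D hd
    simp only [Form.compl, Form.prime, Form.subst]
    have hA' : A1.IsL0 ∧ A2.IsL0 := hA
    have hl : A1.lev ≤ k ∧ A2.lev ≤ k := by simp [lev] at hlev; omega
    have w1 := (omprov _ _ _).mp (ih1 hA'.1 hl.1 B D hd)
    have w2 := (omprov _ _ _).mp (ih2 hA'.2 hl.2 B D hd)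
    set L1 := subst (compl A1) B
    set L2 := subst (compl A2) B
    set R1 := subst (prime A1) D
    set R2 := subst (prime A2) D
    have d1 : OmDerAux (prevOf k) k false (insert R1 (insert R2 {L1})) :=
      weak w1 (by intro x hx; simp [Finset.mem_insert] at hx ⊢; tauto)
    have d2 : OmDerAux (prevOf k) k false (insert R1 (insert R2 {L2})) :=
      weak w2 (by intro x hx; simp [Finset.mem_insert] at hx ⊢; tauto)
    have e1 := OmDerAux.orR false ({L1} : Sequent) R1 R2 d1
    have e2 := OmDerAux.orR false ({L2} : Sequent) R1 R2 d2
    have f1 : OmDerAux (prevOf k) k false (insert L1 {or R1 R2}) :=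
      weak e1 (by intro x hx; simp [Finset.mem_insert] at hx ⊢; tauto)
    have f2 : OmDerAux (prevOf k) k false (insert L2 {or R1 R2}) :=
      weak e2 (by intro x hx; simp [Finset.mem_insert] at hx ⊢; tauto)
    have g := OmDerAux.andR false ({or R1 R2} : Sequent) L1 L2 f1 f2
    exact (omprov _ _ _).mpr (weak g (by intro x hx; simp [Finset.mem_insert] at hx ⊢; tauto))
  | box A1 ih =>
    intro hA hlev B D hd
    simp only [Form.compl, Form.prime, Form.subst]
    have w := (omprov _ _ _).mp (ih hA (by simpa [lev] using hlev) B D hd)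
    set L1 := subst (compl A1) B
    set R1 := subst (prime A1) D
    have d := OmDerAux.boxR false ({L1} : Sequent) (∅ : Sequent) R1
      (weak w (by intro x hx; simp [Finset.mem_insert] at hx ⊢; tauto))
    exact (omprov _ _ _).mpr (weak d (by
      intro x hx
      simp [Finset.mem_union, Finset.mem_image, Finset.mem_insert] at hx ⊢
      tauto))
  | dia A1 ih =>
    intro hA hlev B D hd
    simp only [Form.compl, Form.prime, Form.subst]
    have w := (omprov _ _ _).mp (ih hA (by simpa [lev] using hlev) B D hd)
    set L1 := subst (compl A1) B
    set R1 := subst (prime A1) D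
    have d := OmDerAux.boxR false ({R1} : Sequent) (∅ : Sequent) L1
      (weak w (by intro x hx; simp [Finset.mem_insert] at hx ⊢; tauto))
    exact (omprov _ _ _).mpr (weak d (by
      intro x hx
      simp [Finset.mem_union, Finset.mem_image, Finset.mem_insert] at hx ⊢
      tauto))
  | mu A1 ih =>
    intro hA hlev B D hd
    simp only [Form.compl, Form.prime, Form.subst]
    have hA' : A1.IsL0 := hA
    have hl : A1.lev ≤ k := by simp [lev] at hlev; omega
    have hprem : ∀ i, OmDerAux (prevOf k) k false
        (insert (iter (compl A1) i) ({mu (prime A1)} : Sequent)) := by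
      intro i
      induction i with
      | zero => exact derTop (Finset.mem_insert_self _ _)
      | succ i ihi =>
        have hstep := ih hA' hl (iter (compl A1) i) (mu (prime A1))
          ((omprov _ _ _).mpr ihi)
        have hclo := OmDerAux.clo (prev := prevOf k) (k := k) false
          ({iter (compl A1) (i + 1)} : Sequent) (prime A1)
          (weak ((omprov _ _ _).mp hstep) (by
            intro x hx
            rcases Finset.mem_insert.mp hx with rfl | hx
            · exact Finset.mem_insert_of_mem (Finset.mem_singleton_self _)
            · rw [Finset.mem_singleton] at hx; subst hx
              exact Finset.mem_insert_self _ _))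
        refine weak hclo ?_
        intro x hx
        rcases Finset.mem_insert.mp hx with rfl | hx
        · exact Finset.mem_insert_of_mem (Finset.mem_singleton_self _)
        · rw [Finset.mem_singleton] at hx; subst hx
          exact Finset.mem_insert_self _ _
    exact (omprov _ _ _).mpr
      (OmDerAux.nuR false ({mu (prime A1)} : Sequent) (compl A1) hprem)
  | nu A1 ih =>
    intro hA hlev B D hd
    simp only [Form.compl, Form.prime, Form.subst]
    have hA' : A1.IsL0 := hA
    have hk1 : 1 ≤ k := by simp [lev] at hlev; omega
    obtain ⟨k', rfl⟩ : ∃ k', k = k' + 1 := ⟨k - 1, by omega⟩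
    have hNe : prime (compl (mu (compl A1))) = nut (prime A1) := by
      show nut (prime (compl (compl A1))) = _
      rw [compl_compl A1 hA']
    have hlevN : (prime (compl (mu (compl A1)))).lev = A1.lev + 1 := by
      rw [lev_Nform, lev_compl]
    have hmuL0 : (Form.mu (Form.compl A1)).IsL0 := isL0_compl A1 hA'
    refine (omprov _ _ _).mpr (weak (OmDerAux.omega false ({mu (compl A1)} : Sequent)
      (compl A1) (A1.lev + 1) (by omega) (by simp [lev] at hlev; omega)
      (isL0_compl A1 hA') hlevN ?_) ?_)
    · intro Δ hcl hpos hprev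
      have hS := unprimeS k' false _ ((omprov _ _ _).mp hprev) rfl Δ
        ({prime (mu (compl A1))} : Sequent)
        (by
          intro x hx
          rcases Finset.mem_insert.mp hx with rfl | hx
          · exact Finset.mem_union_right _ (Finset.mem_singleton_self _)
          · exact Finset.mem_union_left _ hx)
        hcl
        (by
          intro F hF
          rw [Finset.mem_singleton] at hF; subst hF
          exact ⟨Form.mu (Form.compl A1), hmuL0, trivial, rfl⟩)
      have hS2 := monoP_all k' _ hS
      refine weak ((omprov _ _ _).mp hS2) ?_
      intro x hx
      rcases Finset.mem_union.mp hx with h | h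
      · exact Finset.mem_union_left _ h
      · obtain ⟨F, hF, rfl⟩ := Finset.mem_image.mp h
        rw [Finset.mem_singleton] at hF; subst hF
        rw [unp_prime _ hmuL0]
        exact Finset.mem_union_right _ (Finset.mem_singleton_self _)
    · intro x hx
      rcases Finset.mem_insert.mp hx with rfl | hx
      · rw [hNe]
        exact Finset.mem_insert_of_mem (Finset.mem_singleton_self _)
      · rw [Finset.mem_singleton] at hx; subst hx
        exact Finset.mem_insert_self _ _
  | nut A1 ih =>
    intro hA
    exact absurd hA (by simp [IsL0])

end AuxLemmas

/-- for `h ≤ k`, if `A` is an operator form of `L0` with `lev(A) = h`,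
`C` a formula of `L0`, and the two-formula sequent `B, Cʹ` is cut-free derivable in
`M^Ω_k`, then so is `(¬A)(B), Aʹ(Cʹ)`. -/
theorem stmt5 (h k : ℕ) (hhk : h ≤ k) (A B C : Form)
    (hA : A.IsL0) (hlev : A.lev = h)
    (hB : B.ClosedF) (hC : C.IsL0) (hCc : C.ClosedF)
    (hd : OmProv k false {B, C.prime}) :
    OmProv k false {Form.subst (Form.compl A) B, Form.subst A.prime C.prime} := by
  exact V1 k A hA (le_of_eq_of_le hlev hhk) B C.prime hd

end OneVarMu
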